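/- arXiv:2509.24617 — 4 statements merged into one kernel-verified Lean document; each statement's English description precedes it below -/
import Mathlib

section
/- Let n, m be integers with n ≥ 1 and let ζ = e^{2πi/n}. Let F₂ be the free group on two generators a, b and c = aba⁻¹b⁻¹. If there exists an irreducible unitary representation ρ : F₂ → U(n) with ρ(c) = ζ^m · I, then n and m are coprime. -/
/-- A family of matrices acts irreducibly on `ℂⁿ` if the only submodules of `ℂⁿ`
invariant under all members of the family are `⊥` and `⊤`. -/
def MatIrreducible {n : ℕ} {ι : Type*} (M : ι → Matrix (Fin n) (Fin n) ℂ) : Prop :=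
  ∀ W : Submodule ℂ (Fin n → ℂ),
    (∀ i, ∀ v ∈ W, (M i).mulVec v ∈ W) → W = ⊥ ∨ W = ⊤

lemma inv_inv_submod {n : ℕ} (M M' : Matrix (Fin n) (Fin n) ℂ) (h1 : M * M' = 1)
    (W : Submodule ℂ (Fin n → ℂ)) (hW : ∀ v ∈ W, M.mulVec v ∈ W) :
    ∀ v ∈ W, M'.mulVec v ∈ W := by
  have h2 : M' * M = 1 := mul_eq_one_comm.mp h1
  have hinj : Function.Injective M.mulVecLin := by
    intro x y hxy
    have : M'.mulVec (M.mulVec x) = M'.mulVec (M.mulVec y) := by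
      simpa [Matrix.mulVecLin] using congrArg M'.mulVec hxy
    simpa [Matrix.mulVec_mulVec, h2] using this
  have hmap : W.map M.mulVecLin = W := by
    apply Submodule.eq_of_le_of_finrank_le
    · exact Submodule.map_le_iff_le_comap.mpr (fun v hv => hW v hv)
    · rw [(Submodule.equivMapOfInjective _ hinj W).finrank_eq]
  intro v hv
  obtain ⟨w, hw, hwe⟩ := hmap.symm ▸ hv
  have : M'.mulVec v = w := by
    rw [← hwe]; simp [Matrix.mulVecLin, Matrix.mulVec_mulVec, h2]
  rwa [this]

lemma all_invariant {n : ℕ} (ρ : FreeGroup (Fin 2) →* Matrix.unitaryGroup (Fin n) ℂ)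
    (W : Submodule ℂ (Fin n → ℂ))
    (hgen : ∀ x : Fin 2, ∀ v ∈ W, ((ρ (FreeGroup.of x) : Matrix (Fin n) (Fin n) ℂ)).mulVec v ∈ W) :
    ∀ g : FreeGroup (Fin 2), ∀ v ∈ W, ((ρ g : Matrix (Fin n) (Fin n) ℂ)).mulVec v ∈ W := by
  intro g
  induction g using FreeGroup.induction_on with
  | C1 => simp
  | of x => exact hgen x
  | inv_of x _ =>
      refine inv_inv_submod _ _ ?_ W (hgen x)
      show ((ρ (FreeGroup.of x) : Matrix (Fin n) (Fin n) ℂ)) * (ρ (FreeGroup.of x)⁻¹ : Matrix (Fin n) (Fin n) ℂ) = 1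
      rw [← Submonoid.coe_mul, ← _root_.map_mul, mul_inv_cancel, _root_.map_one, Submonoid.coe_one]
  | mul x y hx hy =>
      intro v hv
      have : ((ρ (x*y) : Matrix (Fin n) (Fin n) ℂ)).mulVec v
          = ((ρ x : Matrix (Fin n) (Fin n) ℂ)).mulVec (((ρ y : Matrix (Fin n) (Fin n) ℂ)).mulVec v) := by
        simp [Matrix.mulVec_mulVec]
      rw [this]; exact hx _ (hy v hv)

lemma exists_eigen {n : ℕ} (hn : 1 ≤ n) (M : Matrix (Fin n) (Fin n) ℂ) :
    ∃ (μ : ℂ) (v : Fin n → ℂ), v ≠ 0 ∧ M.mulVec v = μ • v := by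
  have : Nontrivial (Fin n → ℂ) := by
    have : Nonempty (Fin n) := ⟨⟨0, hn⟩⟩
    infer_instance
  obtain ⟨μ, hμ⟩ := Module.End.exists_eigenvalue (M.mulVecLin : Module.End ℂ (Fin n → ℂ))
  obtain ⟨v, hv⟩ := hμ.exists_hasEigenvector
  exact ⟨μ, v, hv.2, hv.apply_eq_smul⟩

/-- If there exists an irreducible unitary representation `ρ : F₂ → U(n)` with
`ρ(aba⁻¹b⁻¹) = ζ^m I` where `ζ = e^{2πi/n}`, then `n` and `m` are coprime. -/
theorem stmt0 (n : ℕ) (hn : 1 ≤ n) (m : ℤ)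
    (ρ : FreeGroup (Fin 2) →* Matrix.unitaryGroup (Fin n) ℂ)
    (hirr : MatIrreducible (fun g : FreeGroup (Fin 2) => (ρ g : Matrix (Fin n) (Fin n) ℂ)))
    (hc : ((ρ (FreeGroup.of 0 * FreeGroup.of 1 * (FreeGroup.of 0)⁻¹ * (FreeGroup.of 1)⁻¹) :
        Matrix (Fin n) (Fin n) ℂ)) =
      (Complex.exp (2 * Real.pi * Complex.I / n)) ^ m • (1 : Matrix (Fin n) (Fin n) ℂ)) :
    Int.gcd n m = 1 := by
  set ζ : ℂ := Complex.exp (2 * Real.pi * Complex.I / n) with hζdef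
  set A : Matrix (Fin n) (Fin n) ℂ := (ρ (FreeGroup.of 0) : Matrix (Fin n) (Fin n) ℂ) with hA
  set B : Matrix (Fin n) (Fin n) ℂ := (ρ (FreeGroup.of 1) : Matrix (Fin n) (Fin n) ℂ) with hB
  have hζ0 : ζ ≠ 0 := Complex.exp_ne_zero _
  have hζn : ζ ^ (n : ℤ) = 1 := by
    rw [zpow_natCast, hζdef, ← Complex.exp_nat_mul, mul_div_cancel₀]
    · exact Complex.exp_two_pi_mul_I
    · exact_mod_cast (by omega : n ≠ 0)
  -- key commutation relation
  have key : A * B = ζ ^ m • (B * A) := by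
    have hg : (FreeGroup.of 0 : FreeGroup (Fin 2)) * FreeGroup.of 1 =
        (FreeGroup.of 0 * FreeGroup.of 1 * (FreeGroup.of 0)⁻¹ * (FreeGroup.of 1)⁻¹) *
          (FreeGroup.of 1 * FreeGroup.of 0) := by group
    calc A * B = ((ρ (FreeGroup.of 0 * FreeGroup.of 1) : Matrix (Fin n) (Fin n) ℂ)) := by
          rw [_root_.map_mul, Submonoid.coe_mul]
      _ = ((ρ ((FreeGroup.of 0 * FreeGroup.of 1 * (FreeGroup.of 0)⁻¹ * (FreeGroup.of 1)⁻¹) *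
            (FreeGroup.of 1 * FreeGroup.of 0)) : Matrix (Fin n) (Fin n) ℂ)) := by rw [← hg]
      _ = ((ρ (FreeGroup.of 0 * FreeGroup.of 1 * (FreeGroup.of 0)⁻¹ * (FreeGroup.of 1)⁻¹) :
            Matrix (Fin n) (Fin n) ℂ)) * (B * A) := by
          simp only [_root_.map_mul, Submonoid.coe_mul, hA, hB]
      _ = ζ ^ m • (B * A) := by rw [hc, smul_mul_assoc, one_mul]
  -- powers
  have hpow : ∀ i : ℕ, A ^ i * B = ζ ^ (m * i) • (B * A ^ i) := by
    intro i
    induction i with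
    | zero => simp
    | succ i ih =>
        calc A ^ (i+1) * B = A * (A ^ i * B) := by rw [pow_succ', mul_assoc]
          _ = A * (ζ ^ (m * i) • (B * A ^ i)) := by rw [ih]
          _ = ζ ^ (m * i) • (A * B * A ^ i) := by
              rw [mul_smul_comm, mul_assoc]
          _ = ζ ^ (m * i) • ((ζ ^ m • (B * A)) * A ^ i) := by rw [key]
          _ = (ζ ^ (m * i) * ζ ^ m) • (B * A ^ (i+1)) := by
              rw [smul_mul_assoc, smul_smul, mul_assoc, ← pow_succ']
          _ = ζ ^ (m * (i+1 : ℕ)) • (B * A ^ (i+1)) := by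
              rw [← zpow_add₀ hζ0]
              norm_num [mul_add]
  by_contra hd
  set d : ℕ := Int.gcd n m with hdd
  have hd0 : d ≠ 0 := by
    intro h
    have := Int.gcd_eq_zero_iff.mp h
    simp at this
    omega
  have hd2 : 2 ≤ d := by omega
  have hdn : d ∣ n := by
    have := Int.gcd_dvd_left (a := (n:ℤ)) (b := m)
    exact_mod_cast this
  have hdm : (d : ℤ) ∣ m := Int.gcd_dvd_right _ _
  set k : ℕ := n / d with hkd
  have hk : k * d = n := Nat.div_mul_cancel hdn
  have hk1 : 1 ≤ k := by
    rcases Nat.eq_zero_or_pos k with h | h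
    · rw [h, zero_mul] at hk; omega
    · omega
  have hkn : k < n := Nat.div_lt_self (by omega) (by omega)
  have hζmk : ζ ^ (m * k) = 1 := by
    obtain ⟨m', hm'⟩ := hdm
    have : m * k = (n : ℤ) * m' := by
      rw [hm']
      push_cast [← hk]
      ring
    rw [this, zpow_mul, hζn, one_zpow]
  have hAkB : A ^ k * B = B * A ^ k := by
    have := hpow k
    rw [hζmk, one_smul] at this
    exact this
  -- A^k has an eigenvalue μ; by irreducibility A^k = μ I (on vectors)
  obtain ⟨μ, w, hw0, hwμ⟩ := exists_eigen hn (A ^ k)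
  have hAk : ∀ v : Fin n → ℂ, (A ^ k).mulVec v = μ • v := by
    set W1 : Submodule ℂ (Fin n → ℂ) :=
      LinearMap.ker ((A ^ k).mulVecLin - μ • LinearMap.id) with hW1
    have hmem : ∀ v, v ∈ W1 ↔ (A ^ k).mulVec v = μ • v := by
      intro v
      simp [hW1, LinearMap.mem_ker, sub_eq_zero]
    have hcomm' : ∀ X : Matrix (Fin n) (Fin n) ℂ, A ^ k * X = X * A ^ k →
        ∀ v ∈ W1, X.mulVec v ∈ W1 := by
      intro X hX v hv
      rw [hmem] at hv ⊢
      rw [Matrix.mulVec_mulVec, hX, ← Matrix.mulVec_mulVec, hv, Matrix.mulVec_smul]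
    have hinv : ∀ g : FreeGroup (Fin 2), ∀ v ∈ W1,
        ((ρ g : Matrix (Fin n) (Fin n) ℂ)).mulVec v ∈ W1 := by
      apply all_invariant
      intro x
      fin_cases x
      · exact hcomm' A ((Commute.refl A).pow_left k)
      · exact hcomm' B hAkB
    rcases hirr W1 hinv with h | h
    · exfalso
      apply hw0
      have : w ∈ W1 := (hmem w).mpr hwμ
      rw [h] at this
      simpa using this
    · intro v
      exact (hmem v).mp (h ▸ Submodule.mem_top)
  have hμ0 : μ ≠ 0 := by
    intro h
    apply hw0
    have := hwμ
    rw [h, zero_smul] at this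
    have h2 : ((A ^ k)⁻¹ * (A ^ k)).mulVec w = 0 := by
      rw [← Matrix.mulVec_mulVec, this, Matrix.mulVec_zero]
    have hu : IsUnit (A ^ k) := by
      have : A ∈ unitary (Matrix (Fin n) (Fin n) ℂ) := (ρ (FreeGroup.of 0)).2
      exact (IsUnit.pow k ⟨Unitary.toUnits ⟨A, this⟩, rfl⟩)
    rwa [Matrix.nonsing_inv_mul _ ((Matrix.isUnit_iff_isUnit_det _).mp hu),
      Matrix.one_mulVec] at h2
  -- eigenvector of B
  obtain ⟨l, v, hv0, hvl⟩ := exists_eigen hn B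
  set W : Submodule ℂ (Fin n → ℂ) :=
    Submodule.span ℂ (Set.range fun i : Fin k => (A ^ (i : ℕ)).mulVec v) with hW
  have hgen : ∀ i : Fin k, (A ^ (i : ℕ)).mulVec v ∈ W :=
    fun i => Submodule.subset_span ⟨i, rfl⟩
  have hvW : v ∈ W := by
    have := hgen ⟨0, hk1⟩
    simpa using this
  -- invariance under A
  have hinvA : ∀ u ∈ W, A.mulVec u ∈ W := by
    have : W.map A.mulVecLin ≤ W := by
      rw [hW, Submodule.map_span, Submodule.span_le]
      rintro _ ⟨_, ⟨i, rfl⟩, rfl⟩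
      show A.mulVecLin ((A ^ (i:ℕ)).mulVec v) ∈ W
      have heq : A.mulVecLin ((A ^ (i:ℕ)).mulVec v) = (A ^ ((i:ℕ)+1)).mulVec v := by
        simp [Matrix.mulVecLin, Matrix.mulVec_mulVec, pow_succ']
      rw [heq]
      rcases Nat.lt_or_ge ((i:ℕ)+1) k with h | h
      · exact hgen ⟨(i:ℕ)+1, h⟩
      · have hik : (i:ℕ)+1 = k := by omega
        rw [hik, hAk]
        exact Submodule.smul_mem _ _ hvW
    intro u hu
    exact this ⟨u, hu, rfl⟩
  -- invariance under B
  have hinvB : ∀ u ∈ W, B.mulVec u ∈ W := by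
    have : W.map B.mulVecLin ≤ W := by
      rw [hW, Submodule.map_span, Submodule.span_le]
      rintro _ ⟨_, ⟨i, rfl⟩, rfl⟩
      show B.mulVecLin ((A ^ (i:ℕ)).mulVec v) ∈ W
      have hBA : B * A ^ (i:ℕ) = (ζ ^ (m * (i:ℕ)))⁻¹ • (A ^ (i:ℕ) * B) := by
        rw [hpow (i:ℕ), smul_smul, inv_mul_cancel₀ (zpow_ne_zero _ hζ0), one_smul]
      have : B.mulVecLin ((A ^ (i:ℕ)).mulVec v)
          = ((ζ ^ (m * (i:ℕ)))⁻¹ * l) • (A ^ (i:ℕ)).mulVec v := by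
        show B.mulVec ((A ^ (i:ℕ)).mulVec v) = _
        rw [Matrix.mulVec_mulVec, hBA, Matrix.smul_mulVec,
          ← Matrix.mulVec_mulVec, hvl, Matrix.mulVec_smul, smul_smul]
      rw [this]
      exact Submodule.smul_mem _ _ (hgen i)
    intro u hu
    exact this ⟨u, hu, rfl⟩
  have hinv : ∀ g : FreeGroup (Fin 2), ∀ u ∈ W,
      ((ρ g : Matrix (Fin n) (Fin n) ℂ)).mulVec u ∈ W := by
    apply all_invariant
    intro x
    fin_cases x
    · exact hinvA
    · exact hinvB
  rcases hirr W hinv with h | h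
  · rw [h] at hvW
    exact hv0 (by simpa using hvW)
  · have h1 : Module.finrank ℂ W = n := by
      rw [h, finrank_top]
      simp
    have h2 : Module.finrank ℂ W ≤ k := by
      have := finrank_span_le_card (R := ℂ)
        (Set.range fun i : Fin k => (A ^ (i : ℕ)).mulVec v)
      calc Module.finrank ℂ W ≤ _ := this
        _ ≤ k := by
            rw [Set.toFinset_range]
            exact (Finset.card_image_le).trans (by simp)
    omega
end

section
/- Let V be a vector space and W ⊆ V a finite-dimensional subspace of dimension d. Let A : V → V be a linear automorphism such that the induced map ⋀^d A on ⋀^d V maps the line ⋀^d W ⊆ ⋀^d V into itself. Then A(W) = W. -/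
/-- An alternating map with index type matching a basis satisfies `f v = det v • f e`. -/
lemma alt_eq_det_smul {R M N ι : Type*} [CommRing R] [AddCommGroup M] [Module R M]
    [AddCommGroup N] [Module R N] [Fintype ι] [DecidableEq ι]
    (e : Module.Basis ι R M) (f : M [⋀^ι]→ₗ[R] N) (v : ι → M) :
    f v = e.det v • f e := by
  have : f = (LinearMap.toSpanSingleton R N (f e)).compAlternatingMap e.det := by
    refine Module.Basis.ext_alternating e fun i h => ?_
    let σ : Equiv.Perm ι := Equiv.ofBijective i (Finite.injective_iff_bijective.1 h)
    change f (⇑e ∘ σ) = (LinearMap.toSpanSingleton R N (f ⇑e)).compAlternatingMap e.det (⇑e ∘ σ)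
    rw [AlternatingMap.map_perm, LinearMap.compAlternatingMap_apply,
      LinearMap.toSpanSingleton_apply, AlternatingMap.map_perm, Module.Basis.det_self]
    rcases Int.units_eq_one_or (Equiv.Perm.sign σ) with h | h <;> simp [h]
  conv_lhs => rw [this]
  simp [LinearMap.toSpanSingleton_apply]

/-- Over a field, `ιMulti` of a linearly independent family is nonzero. -/
lemma iMulti_ne_zero {K V : Type*} [Field K] [AddCommGroup V] [Module K V]
    {n : ℕ} {v : Fin n → V} (hv : LinearIndependent K v) :
    ExteriorAlgebra.ιMulti K n v ≠ 0 := by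
  classical
  set U := Submodule.span K (Set.range v) with hU
  let b : Module.Basis (Fin n) K U := Module.Basis.span hv
  obtain ⟨C, hC⟩ := Submodule.exists_isCompl U
  let π : V →ₗ[K] U := Submodule.linearProjOfIsCompl U C hC
  let f : V [⋀^Fin n]→ₗ[K] K := b.det.compLinearMap π
  have hπ : ∀ i, π (v i) = b i := by
    intro i
    have h1 : (b i : V) = v i := congrArg Subtype.val (Module.Basis.span_apply hv i)
    rw [← h1]
    exact Submodule.linearProjOfIsCompl_apply_left hC (b i)
  have hfv : f v = 1 := by
    have : (fun i => π (v i)) = ⇑b := funext hπ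
    simp only [f, AlternatingMap.compLinearMap_apply]
    rw [show (fun i => π (v i)) = ⇑b from funext hπ, Module.Basis.det_self]
  intro h
  have := congrArg (ExteriorAlgebra.liftAlternating (R := K)
    (Function.update (fun _ => 0) n f)) h
  rw [ExteriorAlgebra.liftAlternating_apply_ιMulti, Function.update_self, hfv, map_zero] at this
  exact one_ne_zero this

/-- The line `⋀^d W` inside the exterior algebra of `V`, for a `d`-dimensional
subspace `W ⊆ V`: the span of all products `w₁ ∧ ⋯ ∧ w_d` with `wᵢ ∈ W`. -/
def exteriorLine (K : Type*) [Field K] {V : Type*} [AddCommGroup V] [Module K V]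
    (W : Submodule K V) (d : ℕ) : Submodule K (ExteriorAlgebra K V) :=
  Submodule.span K {x | ∃ w : Fin d → V, (∀ i, w i ∈ W) ∧
    x = (List.ofFn fun i => ExteriorAlgebra.ι K (w i)).prod}

theorem stmt4' {K : Type*} [Field K] {V : Type*} [AddCommGroup V] [Module K V]
    (W : Submodule K V) [FiniteDimensional K W] (d : ℕ) (hd : Module.finrank K W = d)
    (A : V ≃ₗ[K] V)
    (hmap : Submodule.map (ExteriorAlgebra.map A.toLinearMap).toLinearMap
        (Submodule.span K {x | ∃ w : Fin d → V, (∀ i, w i ∈ W) ∧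
          x = (List.ofFn fun i => ExteriorAlgebra.ι K (w i)).prod}) ≤
        Submodule.span K {x | ∃ w : Fin d → V, (∀ i, w i ∈ W) ∧
          x = (List.ofFn fun i => ExteriorAlgebra.ι K (w i)).prod}) :
    Submodule.map A.toLinearMap W = W := by
  classical
  set L := Submodule.span K {x : ExteriorAlgebra K V | ∃ w : Fin d → V, (∀ i, w i ∈ W) ∧
          x = (List.ofFn fun i => ExteriorAlgebra.ι K (w i)).prod} with hL
  let bW : Module.Basis (Fin d) K W := Module.finBasisOfFinrankEq K W hd
  let e : Fin d → V := fun i => (bW i : V)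
  have he_li : LinearIndependent K e :=
    bW.linearIndependent.map' W.subtype (Submodule.ker_subtype W)
  have he_span : Submodule.span K (Set.range e) = W := by
    have : Set.range e = W.subtype '' Set.range bW := by
      rw [← Set.range_comp]; rfl
    rw [this, ← Submodule.map_span, Module.Basis.span_eq, Submodule.map_subtype_top]
  set ω : ExteriorAlgebra K V := ExteriorAlgebra.ιMulti K d e with hω
  have hω_ne : ω ≠ 0 := iMulti_ne_zero he_li
  -- every generator of L is a multiple of ω
  have hgen : ∀ (w : Fin d → V), (∀ i, w i ∈ W) →
      ∃ c : K, ExteriorAlgebra.ιMulti K d w = c • ω := by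
    intro w hw
    let g : W [⋀^Fin d]→ₗ[K] ExteriorAlgebra K V :=
      (ExteriorAlgebra.ιMulti K d).compLinearMap W.subtype
    have h1 : g (fun i => ⟨w i, hw i⟩) = ExteriorAlgebra.ιMulti K d w := rfl
    have h2 : g (⇑bW) = ω := rfl
    refine ⟨bW.det fun i => ⟨w i, hw i⟩, ?_⟩
    rw [← h1, ← h2]
    exact alt_eq_det_smul bW g _
  -- L = span {ω}
  have hLω : L = Submodule.span K {ω} := by
    apply le_antisymm
    · rw [hL, Submodule.span_le]
      rintro x ⟨w, hw, rfl⟩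
      obtain ⟨c, hc⟩ := hgen w hw
      rw [← ExteriorAlgebra.ιMulti_apply, hc]
      exact Submodule.smul_mem _ _ (Submodule.mem_span_singleton_self ω)
    · rw [Submodule.span_le, Set.singleton_subset_iff]
      exact Submodule.subset_span ⟨e, fun i => (bW i).2, ExteriorAlgebra.ιMulti_apply e⟩
  -- ω maps to c • ω
  have hωL : ω ∈ L := by
    rw [hLω]; exact Submodule.mem_span_singleton_self ω
  obtain ⟨c, hc⟩ : ∃ c : K, (ExteriorAlgebra.map A.toLinearMap) ω = c • ω := by
    have := hmap ⟨ω, hωL, rfl⟩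
    rw [hLω, Submodule.mem_span_singleton] at this
    obtain ⟨c, hc⟩ := this
    exact ⟨c, hc.symm⟩
  have hc_ne : c ≠ 0 := by
    intro h
    rw [h, zero_smul] at hc
    have hAe : LinearIndependent K (⇑A ∘ e) :=
      he_li.map' A.toLinearMap (LinearMap.ker_eq_bot_of_injective A.injective)
    refine iMulti_ne_zero hAe ?_
    show ExteriorAlgebra.ιMulti K d (⇑A.toLinearMap ∘ e) = 0
    rw [← ExteriorAlgebra.map_apply_ιMulti, ← hω, hc]
  -- for v ∈ W, ι v * ω = 0
  have hmul_zero : ∀ v ∈ W, ExteriorAlgebra.ι K v * ω = 0 := by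
    intro v hv
    let g' : V →ₗ[K] ExteriorAlgebra K V :=
      (LinearMap.mulLeft K (1 : ExteriorAlgebra K V)).comp
        ((LinearMap.mulRight K ω).comp (ExteriorAlgebra.ι K))
    have hg' : ∀ u : V, g' u = ExteriorAlgebra.ι K u * ω := by intro u; simp [g']
    have hbase : ∀ i : Fin d, g' (e i) = 0 := by
      intro i
      rw [hg']
      have h1 : (Fin.cons (e i) e : Fin (d + 1) → V) 0 = (Fin.cons (e i) e : Fin (d + 1) → V) i.succ := by
        simp
      have h2 : (0 : Fin (d + 1)) ≠ i.succ := (Fin.succ_ne_zero i).symm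
      have hz : ExteriorAlgebra.ιMulti K (d + 1) (Fin.cons (e i) e) = 0 :=
        AlternatingMap.map_eq_zero_of_eq _ _ h1 h2
      have hmuleq : ExteriorAlgebra.ιMulti K (d + 1) (Fin.cons (e i) e) =
          ExteriorAlgebra.ι K (e i) * ω := by
        rw [ExteriorAlgebra.ιMulti_succ_apply, Fin.cons_zero, hω]
        exact congrArg _ (congrArg _ (Matrix.tail_cons (e i) e))
      rw [← hmuleq, hz]
    have hsub : W ≤ LinearMap.ker g' := by
      rw [← he_span, Submodule.span_le]
      rintro _ ⟨i, rfl⟩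
      exact hbase i
    have := hsub hv
    rw [LinearMap.mem_ker, hg'] at this
    exact this
  -- converse: ι u * ω = 0 → u ∈ W
  have hconv : ∀ u : V, ExteriorAlgebra.ι K u * ω = 0 → u ∈ W := by
    intro u hu
    by_contra h
    have hcons : LinearIndependent K (Fin.cons u e : Fin (d+1) → V) := by
      apply LinearIndependent.fin_cons he_li
      rw [he_span]; exact h
    apply iMulti_ne_zero hcons
    rw [ExteriorAlgebra.ιMulti_succ_apply]
    have h1 : (Fin.cons u e : Fin (d+1) → V) 0 = u := rfl
    have h2 : Matrix.vecTail (Fin.cons u e : Fin (d+1) → V) = e := by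
      ext j; simp [Matrix.vecTail, Fin.tail]
    rw [h1, h2, ← hω, hu]
  -- A maps W into W
  have hle : Submodule.map A.toLinearMap W ≤ W := by
    rintro _ ⟨v, hv, rfl⟩
    apply hconv
    have key : (ExteriorAlgebra.map A.toLinearMap) (ExteriorAlgebra.ι K v * ω) =
        ExteriorAlgebra.ι K (A v) * (c • ω) := by
      rw [map_mul, ExteriorAlgebra.map_apply_ι, hc]
      rfl
    rw [hmul_zero v hv, map_zero] at key
    have : c • (ExteriorAlgebra.ι K (A.toLinearMap v) * ω) = 0 := by
      rw [mul_smul_comm] at key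
      exact key.symm
    exact (smul_eq_zero.mp this).resolve_left hc_ne
  -- equality by dimension
  apply Submodule.eq_of_le_of_finrank_le hle
  rw [LinearEquiv.finrank_map_eq]

/-- Ramanan's observation: if `W ⊆ V` has dimension `d` and a linear automorphism
`A` of `V` maps the line `⋀^d W ⊆ ⋀^d V` into itself, then `A(W) = W`. -/
theorem stmt4 {K : Type*} [Field K] {V : Type*} [AddCommGroup V] [Module K V]
    (W : Submodule K V) [FiniteDimensional K W] (d : ℕ) (hd : Module.finrank K W = d)
    (A : V ≃ₗ[K] V)
    (hmap : Submodule.map (ExteriorAlgebra.map A.toLinearMap).toLinearMap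
        (exteriorLine K W d) ≤ exteriorLine K W d) :
    Submodule.map A.toLinearMap W = W :=
  stmt4' W d hd A hmap
end

section
/- Let F₂ be the free group on a, b and c = aba⁻¹b⁻¹. For any integers n ≥ 1 and m (not necessarily coprime to n), there exists an indecomposable representation ρ : F₂ → GL(n, ℂ) with ρ(c) = e^{2πim/n}·I. -/
open Matrix Finset

namespace Stmt16Aux

section pmat
variable {ι : Type*} [Fintype ι] [DecidableEq ι]

def pmat (e : ι ≃ ι) : Matrix ι ι ℂ := Matrix.of fun x y => if y = e x then 1 else 0

lemma pmat_mul (e : ι ≃ ι) (X : Matrix ι ι ℂ) :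
    pmat e * X = Matrix.of fun x y => X (e x) y := by
  ext x y
  simp only [mul_apply, pmat, Matrix.of_apply, ite_mul, one_mul, zero_mul]
  rw [Finset.sum_eq_single (e x)] <;> simp +contextual [eq_comm]

lemma mul_pmat (e : ι ≃ ι) (X : Matrix ι ι ℂ) :
    X * pmat e = Matrix.of fun x y => X x (e.symm y) := by
  ext x y
  simp only [mul_apply, pmat, Matrix.of_apply, mul_ite, mul_one, mul_zero]
  rw [Finset.sum_eq_single (e.symm y)] <;> simp +contextual [Equiv.eq_symm_apply, eq_comm]

lemma pmat_mul_pmat_symm (e : ι ≃ ι) : pmat e * pmat e.symm = 1 := by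
  rw [pmat_mul]
  ext x y
  simp [pmat, Matrix.one_apply, eq_comm]

end pmat

section small
variable {h : ℕ}

/-- small shift matrix on `Fin h` -/
def Nsm (h : ℕ) : Matrix (Fin h) (Fin h) ℂ :=
  Matrix.of fun s t => if (t : ℕ) = (s : ℕ) + 1 then 1 else 0

lemma Nsm_pow (k : ℕ) : (Nsm h) ^ k =
    Matrix.of fun s t : Fin h => if (t : ℕ) = (s : ℕ) + k then 1 else 0 := by
  induction k with
  | zero =>
    ext s t
    simp [Matrix.one_apply, Fin.ext_iff, eq_comm]
  | succ k ih =>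
    rw [pow_succ, ih]
    ext s t
    simp only [mul_apply, Matrix.of_apply, Nsm, ite_mul, one_mul, zero_mul]
    by_cases hs : (s : ℕ) + k < h
    · rw [Finset.sum_eq_single (⟨(s : ℕ) + k, hs⟩ : Fin h)]
      · simp [Nat.add_assoc]
      · intro b _ hb
        rcases eq_or_ne ((b : ℕ)) ((s : ℕ) + k) with hbv | hbv
        · exact absurd (Fin.ext hbv) hb
        · rw [if_neg hbv]
      · simp
    · rw [Finset.sum_eq_zero, eq_comm, if_neg (by omega)]
      intro b _
      rw [if_neg (by omega : ¬((b:ℕ) = (s:ℕ)+k))]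

lemma Nsm_pow_h : (Nsm h) ^ h = 0 := by
  rw [Nsm_pow]; ext s t; simp only [Matrix.of_apply, Matrix.zero_apply, ite_eq_right_iff]
  intro ht; exfalso; omega

/-- any poly in Nsm with zero constant term is nilpotent of order ≤ h -/
lemma poly_nilpotent (g : ℕ → ℂ) (hg : g 0 = 0) (hh : 0 < h) :
    (∑ d ∈ Finset.range h, g d • (Nsm h) ^ d) ^ h = 0 := by
  obtain ⟨h', rfl⟩ : ∃ h', h = h' + 1 := ⟨h - 1, by omega⟩
  set Y : Matrix (Fin (h'+1)) (Fin (h'+1)) ℂ := ∑ d ∈ Finset.range h', g (d+1) • (Nsm _) ^ d with hY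
  have hXY : (∑ d ∈ Finset.range (h'+1), g d • (Nsm (h'+1)) ^ d) = Nsm _ * Y := by
    rw [Finset.sum_range_succ', hg, pow_zero, zero_smul, add_zero, hY, Finset.mul_sum]
    refine Finset.sum_congr rfl fun d _ => ?_
    rw [mul_smul_comm, pow_succ']
  have hcomm : Commute (Nsm (h'+1)) Y := by
    refine Commute.sum_right _ _ _ fun d _ => ?_
    exact ((Commute.refl _).pow_right d).smul_right _
  rw [hXY, hcomm.mul_pow, Nsm_pow_h, zero_mul]

end small


lemma idem_pow {R : Type*} [Monoid R] {X : R} (hX : X * X = X) (k : ℕ) :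
    X ^ (k + 1) = X := by
  induction k with
  | zero => exact pow_one X
  | succ k ih => rw [pow_succ, ih, hX]

section main

variable (p h : ℕ) (ω : ℂ)

/-- character: i ↦ ω^i on ZMod p -/
def chi : ZMod p → ℂ := fun i => ω ^ i.val

lemma pow_mod_p (hω : ω ^ p = 1) (a : ℕ) : ω ^ (a % p) = ω ^ a := by
  conv_rhs => rw [← Nat.div_add_mod a p, pow_add, pow_mul, hω, one_pow, one_mul]

variable [NeZero p]

lemma chi_add_nat (hω : ω ^ p = 1) (i : ZMod p) (a : ℕ) :
    chi p ω (i + a) = ω ^ a * chi p ω i := by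
  unfold chi
  rw [ZMod.val_add, ZMod.val_natCast, pow_mod_p p ω hω, pow_add, pow_mod_p p ω hω a, mul_comm]

lemma chi_add_one (hω : ω ^ p = 1) (i : ZMod p) : chi p ω (i + 1) = ω * chi p ω i := by
  have := chi_add_nat p ω hω i 1
  simpa using this

lemma chi_ne_zero (hω0 : ω ≠ 0) (i : ZMod p) : chi p ω i ≠ 0 := pow_ne_zero _ hω0

/-- index type -/
abbrev Idx := ZMod p × Fin h

/-- diagonal entries -/
noncomputable def dA : Idx p h → ℂ := fun x => (chi p ω x.1)⁻¹

/-- big nilpotent (1 ⊗ N) -/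
def Nb : Matrix (Idx p h) (Idx p h) ℂ :=
  Matrix.of fun x y => if y.1 = x.1 ∧ (y.2 : ℕ) = (x.2 : ℕ) + 1 then 1 else 0

/-- the matrix A = D(1+N) -/
noncomputable def Amat : Matrix (Idx p h) (Idx p h) ℂ := Matrix.diagonal (dA p h ω) * (1 + Nb p h)

/-- the shift permutation -/
def sh : Idx p h ≃ Idx p h := (Equiv.addRight (1 : ZMod p)).prodCongr (Equiv.refl (Fin h))

def Bmat : Matrix (Idx p h) (Idx p h) ℂ := pmat (sh p h)

lemma sh_apply (x : Idx p h) : sh p h x = (x.1 + 1, x.2) := rfl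

lemma sh_symm_apply (y : Idx p h) : (sh p h).symm y = (y.1 - 1, y.2) := by
  cases y; simp [sh, Equiv.prodCongr, sub_eq_add_neg]

lemma Nb_mul (X : Matrix (Idx p h) (Idx p h) ℂ) :
    Nb p h * X = Matrix.of fun x y =>
      if hs : (x.2 : ℕ) + 1 < h then X (x.1, ⟨(x.2 : ℕ) + 1, hs⟩) y else 0 := by
  ext ⟨i, s⟩ y
  simp only [mul_apply, Nb, Matrix.of_apply, ite_mul, one_mul, zero_mul]
  by_cases hs : (s : ℕ) + 1 < h
  · rw [dif_pos hs, Finset.sum_eq_single ((i, ⟨(s : ℕ) + 1, hs⟩) : Idx p h)]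
    · simp
    · intro z _ hz
      rw [if_neg]
      rintro ⟨h1, h2⟩
      exact hz (by rcases z with ⟨z1, z2⟩; simp only at h1 h2; subst h1; exact congrArg _ (Fin.ext h2))
    · simp
  · rw [dif_neg hs, Finset.sum_eq_zero]
    intro z _
    rw [if_neg]
    rintro ⟨h1, h2⟩
    exact hs (h2 ▸ z.2.isLt)

lemma mul_Nb (X : Matrix (Idx p h) (Idx p h) ℂ) :
    X * Nb p h = Matrix.of fun x y =>
      if ht : 0 < (y.2 : ℕ) then
        X x (y.1, ⟨(y.2 : ℕ) - 1, lt_of_le_of_lt (Nat.sub_le _ _) y.2.isLt⟩) else 0 := by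
  ext x ⟨j, t⟩
  simp only [mul_apply, Nb, Matrix.of_apply, mul_ite, mul_one, mul_zero]
  by_cases ht : 0 < (t : ℕ)
  · rw [dif_pos ht,
      Finset.sum_eq_single ((j, ⟨(t : ℕ) - 1, lt_of_le_of_lt (Nat.sub_le _ _) t.isLt⟩) : Idx p h)]
    · rw [if_pos]; constructor <;> simp; omega
    · intro z _ hz
      rw [if_neg]
      rintro ⟨h1, h2⟩
      exact hz (by rcases z with ⟨z1, z2⟩; simp only at h1 h2; subst h1
                   exact congrArg _ (Fin.ext (by simp; omega)))
    · simp
  · rw [dif_neg ht, Finset.sum_eq_zero]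
    intro z _
    rw [if_neg]
    rintro ⟨h1, h2⟩
    omega

lemma A_mul (T : Matrix (Idx p h) (Idx p h) ℂ) :
    Amat p h ω * T = Matrix.of fun x y =>
      dA p h ω x * (T x y +
        if hs : (x.2 : ℕ) + 1 < h then T (x.1, ⟨(x.2 : ℕ) + 1, hs⟩) y else 0) := by
  rw [Amat, mul_assoc, add_mul, one_mul, Nb_mul]
  ext x y
  rw [Matrix.diagonal_mul]
  simp

lemma mul_A (T : Matrix (Idx p h) (Idx p h) ℂ) :
    T * Amat p h ω = Matrix.of fun x y =>
      (T x y +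
        if ht : 0 < (y.2 : ℕ) then
          T x (y.1, ⟨(y.2 : ℕ) - 1, lt_of_le_of_lt (Nat.sub_le _ _) y.2.isLt⟩) else 0)
        * dA p h ω y := by
  rw [Amat, ← mul_assoc, mul_add, mul_one, mul_Nb]
  ext x ⟨j, t⟩
  rw [Matrix.add_apply, Matrix.mul_diagonal, Matrix.of_apply, Matrix.of_apply]
  by_cases ht : 0 < (t : ℕ)
  · rw [dif_pos ht, dif_pos ht, Matrix.mul_diagonal, add_mul]; rfl
  · rw [dif_neg ht, dif_neg ht, add_zero, add_zero]

end main

end Stmt16Aux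

namespace Stmt16Aux

section main2
variable (p h : ℕ) (ω : ℂ) [NeZero p]

lemma Amat_apply (x y : Idx p h) :
    Amat p h ω x y = dA p h ω x * ((1 : Matrix (Idx p h) (Idx p h) ℂ) x y + Nb p h x y) := by
  rw [Amat, Matrix.diagonal_mul, Matrix.add_apply]

lemma A_comm_B (hω : ω ^ p = 1) (hω0 : ω ≠ 0) :
    Amat p h ω * Bmat p h = ω • (Bmat p h * Amat p h ω) := by
  rw [Bmat, mul_pmat, pmat_mul]
  ext ⟨i, s⟩ ⟨j, t⟩
  simp only [Matrix.smul_apply, Matrix.of_apply, sh_symm_apply, sh_apply]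
  rw [Amat_apply, Amat_apply]
  have h1 : dA p h ω (i, s) = ω * dA p h ω (i + 1, s) := by
    show (chi p ω i)⁻¹ = ω * (chi p ω (i + 1))⁻¹
    rw [chi_add_one p ω hω, mul_inv, ← mul_assoc, mul_inv_cancel₀ hω0, one_mul]
  have h2 : (1 : Matrix (Idx p h) (Idx p h) ℂ) (i, s) (j - 1, t)
      = (1 : Matrix (Idx p h) (Idx p h) ℂ) (i + 1, s) (j, t) := by
    rw [Matrix.one_apply, Matrix.one_apply]
    exact if_congr (by rw [Prod.ext_iff, Prod.ext_iff]; simp [eq_sub_iff_add_eq]) rfl rfl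
  have h3 : Nb p h (i, s) (j - 1, t) = Nb p h (i + 1, s) (j, t) := by
    simp only [Nb, Matrix.of_apply]
    exact if_congr (by simp [sub_eq_iff_eq_add]) rfl rfl
  rw [h1, h2, h3, smul_eq_mul]
  ring

theorem commutant (hh : 0 < h) (hω : ω ^ p = 1)
    (hprim : ∀ k : ℕ, 0 < k → k < p → ω ^ k ≠ 1)
    (T : Matrix (Idx p h) (Idx p h) ℂ) (hT2 : T * T = T)
    (hTA : T * Amat p h ω = Amat p h ω * T) (hTB : T * Bmat p h = Bmat p h * T) :
    T = 0 ∨ T = 1 := by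
  have hω0 : ω ≠ 0 := by
    intro h0
    rw [h0, zero_pow (NeZero.ne p)] at hω
    exact zero_ne_one hω
  -- shift invariance from commuting with B
  have e2 : ∀ (i : ZMod p) (s : Fin h) (j : ZMod p) (t : Fin h),
      T (i + 1, s) (j + 1, t) = T (i, s) (j, t) := by
    intro i s j t
    rw [Bmat, mul_pmat, pmat_mul] at hTB
    have h' := congrFun (congrFun hTB (i, s)) (j + 1, t)
    simp only [Matrix.of_apply, sh_symm_apply, sh_apply, add_sub_cancel_right] at h'
    exact h'.symm
  have shiftn : ∀ (a : ℕ) (i : ZMod p) (s : Fin h) (j : ZMod p) (t : Fin h),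
      T (i + a, s) (j + a, t) = T (i, s) (j, t) := by
    intro a
    induction a with
    | zero => simp
    | succ a ih =>
      intro i s j t
      push_cast
      rw [← add_assoc, ← add_assoc, e2, ih]
  set c : ZMod p → Matrix (Fin h) (Fin h) ℂ :=
    fun k => Matrix.of fun s t => T (0, s) (k, t) with hc
  have Tc : ∀ (i : ZMod p) (s : Fin h) (j : ZMod p) (t : Fin h),
      T (i, s) (j, t) = c (j - i) s t := by
    intro i s j t
    have := shiftn i.val 0 s (j - i) t
    rw [ZMod.natCast_rightInverse i, zero_add, sub_add_cancel] at this
    exact this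
  -- relation from commuting with A
  have e1 : ∀ (k : ZMod p) (s t : Fin h),
      c k s t + (if ht : 0 < (t : ℕ) then
          c k s ⟨(t : ℕ) - 1, lt_of_le_of_lt (Nat.sub_le _ _) t.isLt⟩ else 0)
      = ω ^ k.val * (c k s t +
          (if hs : (s : ℕ) + 1 < h then c k ⟨(s : ℕ) + 1, hs⟩ t else 0)) := by
    intro k s t
    rw [mul_A, A_mul] at hTA
    have h' := congrFun (congrFun hTA ((0 : ZMod p), s)) (k, t)
    simp only [Matrix.of_apply] at h'
    have hd0 : dA p h ω ((0 : ZMod p), s) = 1 := by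
      show (chi p ω 0)⁻¹ = 1
      unfold chi
      rw [ZMod.val_zero, pow_zero, inv_one]
    have hdk : dA p h ω (k, t) = (ω ^ k.val)⁻¹ := rfl
    rw [hd0, one_mul, hdk] at h'
    have hT1 : T ((0 : ZMod p), s) (k, t) = c k s t := by rw [Tc]; simp
    have hT2' : (if ht : 0 < (t : ℕ) then
        T ((0:ZMod p), s) ((k, t).1, ⟨((k,t).2 : ℕ) - 1, lt_of_le_of_lt (Nat.sub_le _ _) (k,t).2.isLt⟩) else 0)
        = (if ht : 0 < (t : ℕ) then
          c k s ⟨(t : ℕ) - 1, lt_of_le_of_lt (Nat.sub_le _ _) t.isLt⟩ else 0) := by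
      split <;> [skip; rfl]
      rw [Tc]; simp
    have hT3 : (if hs : (s : ℕ) + 1 < h then
        T (((0:ZMod p), s).1, ⟨(((0:ZMod p), s).2 : ℕ) + 1, hs⟩) (k, t) else 0)
        = (if hs : (s : ℕ) + 1 < h then c k ⟨(s : ℕ) + 1, hs⟩ t else 0) := by
      split <;> [skip; rfl]
      rw [Tc]; simp
    rw [hT1, hT2', hT3] at h'
    have hωk : (ω : ℂ) ^ k.val ≠ 0 := pow_ne_zero _ hω0
    field_simp at h'
    simp only [dite_eq_ite] at h' ⊢
    rw [h']
  -- off-diagonal blocks vanish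
  have hcz : ∀ k : ZMod p, k ≠ 0 → c k = 0 := by
    intro k hk
    have hkv : 0 < k.val := Nat.pos_of_ne_zero (fun h0 => hk ((ZMod.val_eq_zero k).mp h0))
    have hlam : ω ^ k.val ≠ 1 := hprim k.val hkv (ZMod.val_lt k)
    have key : ∀ (w : ℕ) (s t : Fin h), (h - 1 - (s : ℕ)) + (t : ℕ) = w → c k s t = 0 := by
      intro w
      induction w using Nat.strong_induction_on with
      | _ w IH =>
        intro s t hw
        have e := e1 k s t
        have hX : (if ht : 0 < (t : ℕ) then
            c k s ⟨(t : ℕ) - 1, lt_of_le_of_lt (Nat.sub_le _ _) t.isLt⟩ else 0) = 0 := by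
          split
          · exact IH ((h - 1 - (s : ℕ)) + ((t : ℕ) - 1)) (by omega) s _ rfl
          · rfl
        have hY : (if hs : (s : ℕ) + 1 < h then c k ⟨(s : ℕ) + 1, hs⟩ t else 0) = 0 := by
          split
          · rename_i hs
            exact IH ((h - 1 - ((s : ℕ) + 1)) + (t : ℕ)) (by omega) _ t rfl
          · rfl
        simp only [hX, hY, add_zero] at e
        have : (ω ^ k.val - 1) * c k s t = 0 := by linear_combination -e
        rcases mul_eq_zero.mp this with h1 | h1
        · exact absurd (sub_eq_zero.mp h1) hlam
        · exact h1
    ext s t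
    exact key _ s t rfl
  -- the diagonal block
  set C : Matrix (Fin h) (Fin h) ℂ := c 0 with hCdef
  have r0 : ∀ (s t : Fin h),
      (if ht : 0 < (t : ℕ) then
          C s ⟨(t : ℕ) - 1, lt_of_le_of_lt (Nat.sub_le _ _) t.isLt⟩ else 0)
      = (if hs : (s : ℕ) + 1 < h then C ⟨(s : ℕ) + 1, hs⟩ t else 0) := by
    intro s t
    have e := e1 0 s t
    rw [ZMod.val_zero, pow_zero, one_mul] at e
    exact add_left_cancel e
  have lower : ∀ (tv : ℕ) (t s : Fin h), (t : ℕ) = tv → (t : ℕ) < (s : ℕ) → C s t = 0 := by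
    intro tv
    induction tv with
    | zero =>
      intro t s ht hlt
      have hs1 : ((s : ℕ) - 1) + 1 < h := by omega
      have := r0 ⟨(s : ℕ) - 1, by omega⟩ t
      rw [dif_neg (by omega), dif_pos hs1] at this
      rw [show s = (⟨((s:ℕ) - 1) + 1, hs1⟩ : Fin h) from Fin.ext (by simp; omega)]
      exact this.symm
    | succ tv IH =>
      intro t s ht hlt
      have hs1 : ((s : ℕ) - 1) + 1 < h := by omega
      have := r0 ⟨(s : ℕ) - 1, by omega⟩ t
      rw [dif_pos (by omega), dif_pos hs1] at this
      have hIH := IH ⟨(t : ℕ) - 1, lt_of_le_of_lt (Nat.sub_le _ _) t.isLt⟩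
        ⟨(s : ℕ) - 1, by omega⟩ (by simp; omega) (by simp; omega)
      rw [hIH] at this
      rw [show s = (⟨((s:ℕ) - 1) + 1, hs1⟩ : Fin h) from Fin.ext (by simp; omega)]
      exact this.symm
  have toep : ∀ (sv : ℕ) (s t : Fin h), (s : ℕ) = sv → (s : ℕ) ≤ (t : ℕ) →
      C s t = C ⟨0, hh⟩ ⟨(t : ℕ) - (s : ℕ), lt_of_le_of_lt (Nat.sub_le _ _) t.isLt⟩ := by
    intro sv
    induction sv with
    | zero =>
      intro s t hs hst
      congr 1 <;> exact Fin.ext (by simp; omega)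
    | succ sv IH =>
      intro s t hs hst
      have hs1 : ((s : ℕ) - 1) + 1 < h := by omega
      have := r0 ⟨(s : ℕ) - 1, by omega⟩ t
      rw [dif_pos (by omega), dif_pos hs1] at this
      have hIH := IH ⟨(s : ℕ) - 1, by omega⟩
        ⟨(t : ℕ) - 1, lt_of_le_of_lt (Nat.sub_le _ _) t.isLt⟩ (by simp; omega) (by simp; omega)
      rw [hIH] at this
      rw [show s = (⟨((s:ℕ) - 1) + 1, hs1⟩ : Fin h) from Fin.ext (by simp; omega)]
      rw [← this]
      congr 1
      exact Fin.ext (by simp; omega)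
  -- `C` is a polynomial in the small shift
  set f : ℕ → ℂ := fun d => if hd : d < h then C ⟨0, hh⟩ ⟨d, hd⟩ else 0 with hfdef
  have hCP : C = ∑ d ∈ Finset.range h, f d • Nsm h ^ d := by
    ext s t
    rw [Matrix.sum_apply]
    simp only [Matrix.smul_apply, Nsm_pow, Matrix.of_apply, smul_eq_mul]
    by_cases hst : (s : ℕ) ≤ (t : ℕ)
    · rw [Finset.sum_eq_single ((t : ℕ) - (s : ℕ))]
      · rw [if_pos (by omega), mul_one, toep (s : ℕ) s t rfl hst]
        simp only [hfdef]
        rw [dif_pos (lt_of_le_of_lt (Nat.sub_le _ _) t.isLt)]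
      · intro b _ hb
        rw [if_neg (by omega), mul_zero]
      · intro habs
        exact absurd (Finset.mem_range.mpr (by omega)) habs
    · rw [lower (t : ℕ) t s rfl (by omega), Finset.sum_eq_zero]
      intro b _
      rw [if_neg (by omega), mul_zero]
  -- the diagonal block is idempotent
  have hCC : C * C = C := by
    ext s t
    have h2 := congrFun (congrFun hT2 ((0 : ZMod p), s)) ((0 : ZMod p), t)
    rw [mul_apply] at h2
    have hterm : ∀ z : Idx p h, T ((0 : ZMod p), s) z * T z ((0 : ZMod p), t)
        = if z.1 = 0 then C s z.2 * C z.2 t else 0 := by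
      rintro ⟨k, u⟩
      by_cases hk : k = 0
      · subst hk
        rw [if_pos rfl, Tc, Tc]; simp only [sub_zero]; rfl
      · rw [if_neg hk, Tc, sub_zero, hcz k hk]
        simp
    rw [Finset.sum_congr rfl (fun z _ => hterm z)] at h2
    rw [Fintype.sum_prod_type, Finset.sum_eq_single (0 : ZMod p)] at h2
    · rw [Tc, sub_zero] at h2
      rw [mul_apply]
      simp only [if_pos rfl] at h2
      exact h2
    · intro k _ hk
      simp [hk]
    · simp
  have hf0 : f 0 * f 0 = f 0 := by
    have h00 := congrFun (congrFun hCC ⟨0, hh⟩) ⟨0, hh⟩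
    rw [mul_apply, Finset.sum_eq_single (⟨0, hh⟩ : Fin h)] at h00
    · rw [hfdef]
      simp only [dif_pos hh]
      exact h00
    · intro u _ hu
      rw [lower 0 ⟨0, hh⟩ u rfl (by simpa [Fin.ext_iff, pos_iff_ne_zero] using hu), mul_zero]
    · simp
  have hf01 : f 0 = 0 ∨ f 0 = 1 := by
    have : f 0 * (f 0 - 1) = 0 := by linear_combination hf0
    rcases mul_eq_zero.mp this with h1 | h1
    · exact Or.inl h1
    · exact Or.inr (by linear_combination h1)
  rcases hf01 with hf | hf
  · -- C is nilpotent idempotent, hence 0, hence T = 0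
    left
    have hC0 : C = 0 := by
      have hnil := poly_nilpotent f hf hh
      rw [← hCP] at hnil
      have := idem_pow hCC (h - 1)
      rw [show h - 1 + 1 = h by omega] at this
      rw [← this, hnil]
    ext ⟨i, s⟩ ⟨j, t⟩
    rw [Tc, Matrix.zero_apply]
    by_cases hij : j - i = 0
    · rw [hij, ← hCdef, hC0, Matrix.zero_apply]
    · rw [hcz _ hij, Matrix.zero_apply]
  · -- C = 1, hence T = 1
    right
    have hC1 : C = 1 := by
      set g : ℕ → ℂ := fun d => if d = 0 then 0 else -f d with hgdef
      have hgsum : (∑ d ∈ Finset.range h, g d • Nsm h ^ d) = 1 - C := by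
        have hadd : (∑ d ∈ Finset.range h, g d • Nsm h ^ d)
            + (∑ d ∈ Finset.range h, f d • Nsm h ^ d)
            = ∑ d ∈ Finset.range h, ((g d + f d) • Nsm h ^ d) := by
          rw [← Finset.sum_add_distrib]
          exact Finset.sum_congr rfl fun d _ => (add_smul _ _ _).symm
        have hone : (∑ d ∈ Finset.range h, ((g d + f d) • Nsm h ^ d))
            = (1 : Matrix (Fin h) (Fin h) ℂ) := by
          rw [Finset.sum_eq_single 0]
          · rw [hgdef]; simp [hf]
          · intro b _ hb
            rw [hgdef]
            simp [hb]
          · intro habs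
            exact absurd (Finset.mem_range.mpr hh) habs
        rw [eq_sub_iff_add_eq, hCP, hadd, hone]
      have hnil := poly_nilpotent g (by rw [hgdef]; simp) hh
      rw [hgsum] at hnil
      have hidem : (1 - C) * (1 - C) = 1 - C := by
        rw [mul_sub, mul_one, sub_mul, one_mul, hCC, sub_self, sub_zero]
      have := idem_pow hidem (h - 1)
      rw [show h - 1 + 1 = h by omega] at this
      have h10 : (1 : Matrix (Fin h) (Fin h) ℂ) - C = 0 := by rw [← this, hnil]
      have := sub_eq_zero.mp h10
      exact this.symm
    ext ⟨i, s⟩ ⟨j, t⟩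
    rw [Tc, Matrix.one_apply]
    by_cases hij : j - i = 0
    · have hji : i = j := (sub_eq_zero.mp hij).symm
      rw [hij, ← hCdef, hC1, Matrix.one_apply]
      subst hji
      simp [Prod.ext_iff]
    · rw [hcz _ hij, Matrix.zero_apply, if_neg]
      rintro ⟨rfl, rfl⟩
      exact hij (sub_self _)

end main2
end Stmt16Aux

namespace Stmt16Aux

section units
variable (p h : ℕ) (ω : ℂ) [NeZero p]

lemma Nb_pow (k : ℕ) : Nb p h ^ k =
    Matrix.of fun x y : Idx p h => if y.1 = x.1 ∧ (y.2 : ℕ) = (x.2 : ℕ) + k then 1 else 0 := by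
  induction k with
  | zero =>
    ext ⟨i, s⟩ ⟨j, t⟩
    rw [pow_zero, Matrix.one_apply]
    exact if_congr (by simp [Prod.ext_iff, Fin.ext_iff, eq_comm, and_comm]) rfl rfl
  | succ k ih =>
    rw [pow_succ', ih, Nb_mul]
    ext ⟨i, s⟩ ⟨j, t⟩
    simp only [Matrix.of_apply]
    by_cases hs : (s : ℕ) + 1 < h
    · rw [dif_pos hs]
      exact if_congr (by simp; omega) rfl rfl
    · rw [dif_neg hs, eq_comm, if_neg]
      rintro ⟨h1, h2⟩
      have := t.isLt
      omega

lemma Nb_nilpotent : IsNilpotent (Nb p h) := by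
  refine ⟨h, ?_⟩
  rw [Nb_pow]
  ext ⟨i, s⟩ ⟨j, t⟩
  simp only [Matrix.of_apply, Matrix.zero_apply, ite_eq_right_iff]
  rintro ⟨h1, h2⟩
  have := t.isLt
  omega

lemma Amat_isUnit (hω0 : ω ≠ 0) : IsUnit (Amat p h ω) := by
  rw [Amat]
  refine IsUnit.mul ?_ ((Nb_nilpotent p h).isUnit_one_add)
  rw [Matrix.isUnit_diagonal]
  refine ⟨⟨dA p h ω, fun x => chi p ω x.1, ?_, ?_⟩, rfl⟩
  · funext x
    exact inv_mul_cancel₀ (chi_ne_zero p ω hω0 x.1)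
  · funext x
    exact mul_inv_cancel₀ (chi_ne_zero p ω hω0 x.1)

/-- B as an explicit unit -/
def uB : (Matrix (Idx p h) (Idx p h) ℂ)ˣ where
  val := Bmat p h
  inv := pmat (sh p h).symm
  val_inv := pmat_mul_pmat_symm _
  inv_val := by
    have := pmat_mul_pmat_symm (sh p h).symm
    rwa [Equiv.symm_symm] at this

lemma comm_val (hω : ω ^ p = 1) (hω0 : ω ≠ 0)
    (uA : (Matrix (Idx p h) (Idx p h) ℂ)ˣ) (hA : (uA : Matrix (Idx p h) (Idx p h) ℂ) = Amat p h ω) :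
    ((uA * uB p h * uA⁻¹ * (uB p h)⁻¹ : (Matrix (Idx p h) (Idx p h) ℂ)ˣ) :
        Matrix (Idx p h) (Idx p h) ℂ) = ω • 1 := by
  have hB : ((uB p h : Matrix (Idx p h) (Idx p h) ℂ)) = Bmat p h := rfl
  rw [Units.val_mul, Units.val_mul, Units.val_mul, hA, hB]
  rw [A_comm_B p h ω hω hω0, smul_mul_assoc, smul_mul_assoc, mul_assoc (Bmat p h)]
  rw [← hA, Units.mul_inv, mul_one, ← hB, Units.mul_inv]

end units
end Stmt16Aux

open Matrix Finset Stmt16Aux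

/-- For any integers `n ≥ 1` and `m` (not necessarily coprime to `n`), there
exists an indecomposable representation `ρ : F₂ → GL(n, ℂ)` of the free group on
`a, b` with `ρ(aba⁻¹b⁻¹) = e^{2πim/n}·I`.  Indecomposability: `ℂⁿ` is not the
direct sum of two nonzero invariant subspaces. -/
theorem stmt16 (n : ℕ) (hn : 1 ≤ n) (m : ℤ) :
    ∃ ρ : FreeGroup (Fin 2) →* GL (Fin n) ℂ,
      ((ρ (FreeGroup.of 0 * FreeGroup.of 1 * (FreeGroup.of 0)⁻¹ * (FreeGroup.of 1)⁻¹) :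
          GL (Fin n) ℂ) : Matrix (Fin n) (Fin n) ℂ) =
        Complex.exp (2 * Real.pi * Complex.I * m / n) • (1 : Matrix (Fin n) (Fin n) ℂ) ∧
      ∀ W₁ W₂ : Submodule ℂ (Fin n → ℂ),
        (∀ g : FreeGroup (Fin 2), ∀ v ∈ W₁, ((ρ g : GL (Fin n) ℂ) : Matrix (Fin n) (Fin n) ℂ).mulVec v ∈ W₁) →
        (∀ g : FreeGroup (Fin 2), ∀ v ∈ W₂, ((ρ g : GL (Fin n) ℂ) : Matrix (Fin n) (Fin n) ℂ).mulVec v ∈ W₂) →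
        IsCompl W₁ W₂ → W₁ = ⊥ ∨ W₂ = ⊥ := by
  classical
  -- arithmetic setup
  set hh := Nat.gcd n m.natAbs with hhdef
  have hh0 : 0 < hh := Nat.gcd_pos_of_pos_left _ (by omega)
  set pp := n / hh with ppdef
  have hdvdn : hh ∣ n := Nat.gcd_dvd_left _ _
  have hn_eq : n = pp * hh := by rw [ppdef]; exact (Nat.div_mul_cancel hdvdn).symm
  have hp0 : 0 < pp := by
    rcases Nat.eq_zero_or_pos pp with h0 | h0
    · rw [h0, zero_mul] at hn_eq; omega
    · exact h0
  haveI : NeZero pp := ⟨hp0.ne'⟩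
  have hdvdm : (hh : ℤ) ∣ m := by
    have h1 : hh ∣ m.natAbs := Nat.gcd_dvd_right _ _
    exact Int.natAbs_dvd_natAbs.mp (by rwa [Int.natAbs_natCast])
  set q : ℤ := m / hh with qdef
  have hm_eq : m = q * hh := (Int.ediv_mul_cancel hdvdm).symm
  have hqabs : m.natAbs = q.natAbs * hh := by
    rw [hm_eq, Int.natAbs_mul, Int.natAbs_natCast]
  have hcop : Nat.Coprime pp q.natAbs := by
    have := Nat.coprime_div_gcd_div_gcd (m := n) (n := m.natAbs) (by omega)
    rwa [← hhdef, ← ppdef, hqabs, Nat.mul_div_cancel _ hh0] at this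
  -- the root of unity
  set ω : ℂ := Complex.exp (2 * Real.pi * Complex.I * q / pp) with ωdef
  have hω0 : ω ≠ 0 := Complex.exp_ne_zero _
  have hppC : (pp : ℂ) ≠ 0 := Nat.cast_ne_zero.mpr hp0.ne'
  have hpi : (2 * (Real.pi : ℂ) * Complex.I) ≠ 0 :=
    mul_ne_zero (mul_ne_zero two_ne_zero (Complex.ofReal_ne_zero.mpr Real.pi_ne_zero))
      Complex.I_ne_zero
  have hωp : ω ^ pp = 1 := by
    rw [ωdef, ← Complex.exp_nat_mul,
      show (pp : ℂ) * (2 * Real.pi * Complex.I * q / pp) = q * (2 * Real.pi * Complex.I) by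
        field_simp]
    exact Complex.exp_int_mul_two_pi_mul_I q
  have hprim : ∀ k : ℕ, 0 < k → k < pp → ω ^ k ≠ 1 := by
    intro k hk hkp hcon
    rw [ωdef, ← Complex.exp_nat_mul] at hcon
    obtain ⟨j, hj⟩ := Complex.exp_eq_one_iff.mp hcon
    have h2 : (2 * (Real.pi:ℂ) * Complex.I) * ((q : ℂ) * k) =
        (2 * (Real.pi:ℂ) * Complex.I) * ((j : ℂ) * pp) := by
      calc (2 * (Real.pi:ℂ) * Complex.I) * ((q : ℂ) * k)
          = ((k : ℂ) * (2 * Real.pi * Complex.I * q / pp)) * pp := by field_simp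
        _ = ((j : ℂ) * (2 * Real.pi * Complex.I)) * pp := by rw [hj]
        _ = (2 * (Real.pi:ℂ) * Complex.I) * ((j : ℂ) * pp) := by ring
    have h3 : (q : ℂ) * k = (j : ℂ) * pp := mul_left_cancel₀ hpi h2
    have h4 : q * (k : ℤ) = j * pp := by exact_mod_cast h3
    have h5 : (pp : ℤ) ∣ q * k := ⟨j, by linarith⟩
    have h6 : pp ∣ q.natAbs * k := by
      have := Int.natAbs_dvd_natAbs.mpr h5
      rwa [Int.natAbs_natCast, Int.natAbs_mul, Int.natAbs_natCast] at this
    have h7 : pp ∣ k := hcop.dvd_of_dvd_mul_left h6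
    have := Nat.le_of_dvd hk h7
    omega
  -- the representation
  have hAu := Amat_isUnit pp hh ω hω0
  set uA := hAu.unit with uAdef
  have huA : (uA : Matrix (Idx pp hh) (Idx pp hh) ℂ) = Amat pp hh ω := hAu.unit_spec
  set ρ₀ : FreeGroup (Fin 2) →* (Matrix (Idx pp hh) (Idx pp hh) ℂ)ˣ :=
    FreeGroup.lift ![uA, uB pp hh] with ρ₀def
  have hcard : Fintype.card (Idx pp hh) = n := by
    simp only [Fintype.card_prod, ZMod.card, Fintype.card_fin]
    omega
  set e : Idx pp hh ≃ Fin n := Fintype.equivFinOfCardEq hcard with edef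
  set F := Matrix.reindexAlgEquiv ℂ ℂ e with Fdef
  set Fm : Matrix (Idx pp hh) (Idx pp hh) ℂ ≃* Matrix (Fin n) (Fin n) ℂ :=
    F.toRingEquiv.toMulEquiv with Fmdef
  set ρ : FreeGroup (Fin 2) →* GL (Fin n) ℂ :=
    (Units.mapEquiv Fm).toMonoidHom.comp ρ₀ with ρdef
  have hcoe : ∀ g : FreeGroup (Fin 2),
      ((ρ g : GL (Fin n) ℂ) : Matrix (Fin n) (Fin n) ℂ) = F ((ρ₀ g : _)) := by
    intro g
    rfl
  refine ⟨ρ, ?_, ?_⟩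
  · -- the commutator value
    have hword : ρ₀ (FreeGroup.of 0 * FreeGroup.of 1 * (FreeGroup.of 0)⁻¹ * (FreeGroup.of 1)⁻¹)
        = uA * uB pp hh * uA⁻¹ * (uB pp hh)⁻¹ := by
      rw [ρ₀def]
      simp [FreeGroup.lift_apply_of]
    rw [hcoe, hword, comm_val pp hh ω hωp hω0 uA huA, _root_.map_smul, _root_.map_one]
    congr 1
    rw [ωdef]
    congr 1
    have hm' : (m : ℂ) = (q : ℂ) * (hh : ℂ) := by exact_mod_cast hm_eq
    have hn' : (n : ℂ) = (pp : ℂ) * (hh : ℂ) := by exact_mod_cast hn_eq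
    have hnC : (n : ℂ) ≠ 0 := Nat.cast_ne_zero.mpr (by omega)
    rw [div_eq_div_iff hppC hnC, hm', hn']
    ring
  · -- indecomposability
    intro W₁ W₂ hW₁ hW₂ hcompl
    set π : (Fin n → ℂ) →ₗ[ℂ] (Fin n → ℂ) :=
      W₁.subtype ∘ₗ (W₁.projectionOnto W₂ hcompl) with πdef
    have hπ₁ : ∀ x ∈ W₁, π x = x := by
      intro x hx
      have := Submodule.projectionOnto_apply_left hcompl ⟨x, hx⟩
      simp only [πdef, LinearMap.comp_apply, Submodule.subtype_apply]
      rw [this]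
    have hπ₂ : ∀ x ∈ W₂, π x = 0 := by
      intro x hx
      simp only [πdef, LinearMap.comp_apply, Submodule.subtype_apply]
      rw [Submodule.projectionOnto_apply_of_mem_right hcompl hx]
      rfl
    have hmem : ∀ v, π v ∈ W₁ := fun v => (W₁.projectionOnto W₂ hcompl v).2
    have hdecomp : ∀ v, v - π v ∈ W₂ := by
      intro v
      have := Submodule.projection_add_projection_eq_self hcompl v
      have h2 : v - π v = ↑(W₂.projectionOnto W₁ hcompl.symm v) := by
        rw [sub_eq_iff_eq_add']; exact this.symm
      rw [h2]
      exact (W₂.projectionOnto W₁ hcompl.symm v).2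
    have hcomm : ∀ M : Matrix (Fin n) (Fin n) ℂ,
        (∀ v ∈ W₁, M.mulVec v ∈ W₁) → (∀ v ∈ W₂, M.mulVec v ∈ W₂) →
        π ∘ₗ Matrix.toLin' M = Matrix.toLin' M ∘ₗ π := by
      intro M h1 h2
      apply LinearMap.ext
      intro v
      simp only [LinearMap.comp_apply, Matrix.toLin'_apply]
      conv_lhs => rw [show v = π v + (v - π v) by ring]
      rw [Matrix.mulVec_add, map_add]
      rw [hπ₁ _ (h1 _ (hmem v)), hπ₂ _ (h2 _ (hdecomp v)), add_zero]
    set T : Matrix (Fin n) (Fin n) ℂ := LinearMap.toMatrix' π with Tdef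
    have hTmul : ∀ M : Matrix (Fin n) (Fin n) ℂ,
        π ∘ₗ Matrix.toLin' M = Matrix.toLin' M ∘ₗ π → T * M = M * T := by
      intro M hM
      have := congrArg LinearMap.toMatrix' hM
      rwa [LinearMap.toMatrix'_comp, LinearMap.toMatrix'_comp, LinearMap.toMatrix'_toLin',
        ← Tdef] at this
    have hTT : T * T = T := by
      rw [Tdef, ← LinearMap.toMatrix'_comp]
      congr 1
      exact LinearMap.ext fun v => hπ₁ _ (hmem v)
    -- the images of the generators
    set A' : Matrix (Fin n) (Fin n) ℂ := ((ρ (FreeGroup.of 0) : GL (Fin n) ℂ) : Matrix (Fin n) (Fin n) ℂ) with A'def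
    set B' : Matrix (Fin n) (Fin n) ℂ := ((ρ (FreeGroup.of 1) : GL (Fin n) ℂ) : Matrix (Fin n) (Fin n) ℂ) with B'def
    have hA' : A' = F (Amat pp hh ω) := by
      rw [A'def, hcoe, ρ₀def]
      simp [FreeGroup.lift_apply_of, huA]
    have hB' : B' = F (Bmat pp hh) := by
      rw [B'def, hcoe, ρ₀def]
      simp only [FreeGroup.lift_apply_of, Matrix.cons_val_one, Matrix.head_cons]
      rfl
    have hTA' : T * A' = A' * T :=
      hTmul A' (hcomm A' (fun v hv => hW₁ (FreeGroup.of 0) v hv)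
        (fun v hv => hW₂ (FreeGroup.of 0) v hv))
    have hTB' : T * B' = B' * T :=
      hTmul B' (hcomm B' (fun v hv => hW₁ (FreeGroup.of 1) v hv)
        (fun v hv => hW₂ (FreeGroup.of 1) v hv))
    -- transport to the model
    set T₀ : Matrix (Idx pp hh) (Idx pp hh) ℂ := F.symm T with T₀def
    have hFT₀ : F T₀ = T := F.apply_symm_apply T
    have hT₀2 : T₀ * T₀ = T₀ := by
      rw [T₀def, ← _root_.map_mul, hTT]
    have hT₀A : T₀ * Amat pp hh ω = Amat pp hh ω * T₀ := by
      have hAm : Amat pp hh ω = F.symm A' := by rw [hA', F.symm_apply_apply]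
      rw [hAm, T₀def, ← _root_.map_mul, ← _root_.map_mul, hTA']
    have hT₀B : T₀ * Bmat pp hh = Bmat pp hh * T₀ := by
      have hBm : Bmat pp hh = F.symm B' := by rw [hB', F.symm_apply_apply]
      rw [hBm, T₀def, ← _root_.map_mul, ← _root_.map_mul, hTB']
    rcases commutant pp hh ω hh0 hωp hprim T₀ hT₀2 hT₀A hT₀B with h0 | h1
    · -- T = 0, so W₁ = ⊥
      left
      have hT : T = 0 := by rw [← hFT₀, h0, _root_.map_zero]
      have hπ0 : π = 0 := by
        have := congrArg Matrix.toLin' hT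
        rwa [Tdef, Matrix.toLin'_toMatrix', _root_.map_zero] at this
      rw [Submodule.eq_bot_iff]
      intro x hx
      rw [← hπ₁ x hx, hπ0]
      rfl
    · -- T = 1, so W₂ = ⊥
      right
      have hT : T = 1 := by rw [← hFT₀, h1, _root_.map_one]
      have hπ1 : π = LinearMap.id := by
        have := congrArg Matrix.toLin' hT
        rwa [Tdef, Matrix.toLin'_toMatrix', Matrix.toLin'_one] at this
      rw [Submodule.eq_bot_iff]
      intro x hx
      have h1 := hπ₂ x hx
      rw [hπ1] at h1
      exact h1
end

section
/- Let σ : F₂ → U(p) be the Heisenberg representation with σ(a) = diag(ζ^q, ζ^{2q}, …, ζ^{pq}) for ζ = e^{2πi/p} and σ(b) the cyclic permutation matrix, where gcd(p,q) = 1, and let τ : F₂ → GL(h,ℂ) send a to the unipotent Jordan block J_h(1) and b to I. Then the only endomorphisms of ℂ^p ⊗ ℂ^h commuting with both (σ⊗τ)(a) and (σ⊗τ)(b) that are idempotent are the scalars 0 and I; hence σ⊗τ is indecomposable. -/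
open Kronecker

private lemma aux_sum {h : ℕ} (m : ℕ) (f : Fin h → ℂ) :
    (∑ k : Fin h, if (k : ℕ) = m then f k else 0) = if hm : m < h then f ⟨m, hm⟩ else 0 := by
  split
  · next hm =>
    rw [Finset.sum_eq_single ⟨m, hm⟩]
    · simp
    · intro k _ hk
      rw [if_neg]; simpa [Fin.ext_iff] using hk
    · simp
  · next hm =>
    apply Finset.sum_eq_zero
    intro k _
    rw [if_neg]
    intro hk; exact hm (hk ▸ k.isLt)

private lemma cancel_ne {a b x : ℂ} (hab : a ≠ b) (hx : a * x = b * x) : x = 0 := by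
  have h1 : (a - b) * x = 0 := by linear_combination hx
  rcases mul_eq_zero.mp h1 with h2 | h2
  · exact absurd (sub_eq_zero.mp h2) hab
  · exact h2

noncomputable def Gf (p h : ℕ) (E : Matrix (Fin p × Fin h) (Fin p × Fin h) ℂ)
    (r s : Fin p) (i j : ℕ) : ℂ :=
  if hx : i < h ∧ j < h then E (r, ⟨i, hx.1⟩) (s, ⟨j, hx.2⟩) else 0

lemma Gf_lt {p h : ℕ} (E : Matrix (Fin p × Fin h) (Fin p × Fin h) ℂ)
    (r s : Fin p) {i j : ℕ} (hi : i < h) (hj : j < h) :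
    Gf p h E r s i j = E (r, ⟨i, hi⟩) (s, ⟨j, hj⟩) := dif_pos ⟨hi, hj⟩

lemma Gf_ge {p h : ℕ} (E : Matrix (Fin p × Fin h) (Fin p × Fin h) ℂ)
    (r s : Fin p) {i j : ℕ} (hij : h ≤ i ∨ h ≤ j) :
    Gf p h E r s i j = 0 := by
  apply dif_neg; omega

lemma Gf_eq_dite {p h : ℕ} (E : Matrix (Fin p × Fin h) (Fin p × Fin h) ℂ)
    (r s : Fin p) (i : ℕ) {j : ℕ} (hj : j < h) :
    Gf p h E r s i j = if hi : i < h then E (r, ⟨i, hi⟩) (s, ⟨j, hj⟩) else 0 := by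
  by_cases hi : i < h
  · rw [Gf_lt E r s hi hj, dif_pos hi]
  · rw [Gf_ge E r s (Or.inl (by omega)), dif_neg hi]

section
variable {p h : ℕ} [NeZero p] (d : Fin p → ℂ) (E : Matrix (Fin p × Fin h) (Fin p × Fin h) ℂ)

lemma mulA_apply (r s : Fin p) (i j : Fin h) :
    (E * (Matrix.diagonal d ⊗ₖ (Matrix.of fun i j : Fin h =>
        if j = i then (1 : ℂ) else if (j : ℕ) = (i : ℕ) + 1 then 1 else 0))) (r,i) (s,j)
    = d s * (E (r,i) (s,j) + ∑ k : Fin h, (if (j:ℕ) = (k:ℕ)+1 then E (r,i) (s,k) else 0)) := by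
  rw [Matrix.mul_apply, Fintype.sum_prod_type]
  have e1 : ∀ (x : Fin p) (x1 : Fin h),
      E (r, i) (x, x1) * (Matrix.diagonal d ⊗ₖ (Matrix.of fun i j : Fin h =>
        if j = i then (1 : ℂ) else if (j : ℕ) = (i : ℕ) + 1 then 1 else 0)) (x, x1) (s, j)
      = (if x = s then (if j = x1 then d s * E (r,i) (s,x1) else 0)
          + (if (j:ℕ) = (x1:ℕ)+1 then d s * E (r,i) (s,x1) else 0) else 0) := by
    intro x x1
    simp only [Matrix.kroneckerMap_apply, Matrix.diagonal_apply, Matrix.of_apply]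
    split_ifs <;> first | omega | (subst_vars; ring)
  simp only [e1]
  rw [Finset.sum_comm]
  simp only [Finset.sum_ite_eq', Finset.mem_univ, if_true, Finset.sum_add_distrib,
    Finset.sum_ite_eq, mul_add, Finset.mul_sum]
  congr 1
  apply Finset.sum_congr rfl
  intro k _
  split_ifs <;> ring

lemma Amul_apply (r s : Fin p) (i j : Fin h) :
    ((Matrix.diagonal d ⊗ₖ (Matrix.of fun i j : Fin h =>
        if j = i then (1 : ℂ) else if (j : ℕ) = (i : ℕ) + 1 then 1 else 0)) * E) (r,i) (s,j)
    = d r * (E (r,i) (s,j) + ∑ k : Fin h, (if (k:ℕ) = (i:ℕ)+1 then E (r,k) (s,j) else 0)) := by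
  rw [Matrix.mul_apply, Fintype.sum_prod_type]
  have e1 : ∀ (x : Fin p) (x1 : Fin h),
      (Matrix.diagonal d ⊗ₖ (Matrix.of fun i j : Fin h =>
        if j = i then (1 : ℂ) else if (j : ℕ) = (i : ℕ) + 1 then 1 else 0)) (r, i) (x, x1) * E (x, x1) (s, j)
      = (if x = r then (if x1 = i then d r * E (r,i) (s,j) else 0)
          + (if (x1:ℕ) = (i:ℕ)+1 then d r * E (r,x1) (s,j) else 0) else 0) := by
    intro x x1
    simp only [Matrix.kroneckerMap_apply, Matrix.diagonal_apply, Matrix.of_apply]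
    split_ifs <;> first | omega | (subst_vars; ring)
  simp only [e1]
  rw [Finset.sum_comm]
  simp only [Finset.sum_ite_eq', Finset.mem_univ, if_true, Finset.sum_add_distrib,
    Finset.sum_ite_eq, mul_add, Finset.mul_sum]
  congr 1
  apply Finset.sum_congr rfl
  intro k _
  split_ifs <;> ring

lemma mulB_apply (r s : Fin p) (i j : Fin h) :
    (E * ((Matrix.of fun i j : Fin p => if i = j + 1 then (1 : ℂ) else 0)
        ⊗ₖ (1 : Matrix (Fin h) (Fin h) ℂ))) (r,i) (s,j) = E (r,i) (s+1,j) := by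
  simp [Matrix.mul_apply, Fintype.sum_prod_type, Matrix.one_apply, mul_ite, ite_and]

open Fin.CommRing in
lemma Bmul_apply (r s : Fin p) (i j : Fin h) :
    (((Matrix.of fun i j : Fin p => if i = j + 1 then (1 : ℂ) else 0)
        ⊗ₖ (1 : Matrix (Fin h) (Fin h) ℂ)) * E) (r,i) (s,j) = E (r-1,i) (s,j) := by
  simp only [Matrix.mul_apply, Fintype.sum_prod_type, Matrix.kroneckerMap_apply, Matrix.one_apply,
    Matrix.of_apply, ite_mul, one_mul, zero_mul, mul_ite, mul_one, mul_zero, Finset.sum_ite_eq,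
    Finset.mem_univ, if_true]
  rw [Finset.sum_eq_single (r-1)]
  · simp [sub_add_cancel]
  · intro t _ ht
    rw [if_neg]
    intro hr; apply ht; rw [hr]; ring
  · simp
end

section
variable {p h : ℕ} [NeZero p]

open Fin.CommRing in
theorem keylemma (hh : 1 ≤ h) (d : Fin p → ℂ)
    (hd0 : ∀ r, d r ≠ 0) (hdinj : Function.Injective d)
    (E : Matrix (Fin p × Fin h) (Fin p × Fin h) ℂ)
    (hEA : E * (Matrix.diagonal d ⊗ₖ (Matrix.of fun i j : Fin h =>
        if j = i then (1 : ℂ) else if (j : ℕ) = (i : ℕ) + 1 then 1 else 0))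
      = (Matrix.diagonal d ⊗ₖ (Matrix.of fun i j : Fin h =>
        if j = i then (1 : ℂ) else if (j : ℕ) = (i : ℕ) + 1 then 1 else 0)) * E)
    (hEB : E * ((Matrix.of fun i j : Fin p => if i = j + 1 then (1 : ℂ) else 0)
        ⊗ₖ (1 : Matrix (Fin h) (Fin h) ℂ))
      = ((Matrix.of fun i j : Fin p => if i = j + 1 then (1 : ℂ) else 0)
        ⊗ₖ (1 : Matrix (Fin h) (Fin h) ℂ)) * E)
    (hE2 : E * E = E) : E = 0 ∨ E = 1 := by
  have hA : ∀ (r s : Fin p) (i j : Fin h),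
      d s * (E (r,i) (s,j) + ∑ k : Fin h, (if (j:ℕ) = (k:ℕ)+1 then E (r,i) (s,k) else 0))
      = d r * (E (r,i) (s,j) + ∑ k : Fin h, (if (k:ℕ) = (i:ℕ)+1 then E (r,k) (s,j) else 0)) :=
    fun r s i j => (mulA_apply d E r s i j).symm.trans
      ((congrFun (congrFun hEA (r,i)) (s,j)).trans (Amul_apply d E r s i j))
  have hshift : ∀ (r s : Fin p) (i j : Fin h), E (r+1,i) (s+1,j) = E (r,i) (s,j) := by
    intro r s i j
    have := (mulB_apply E (r+1) s i j).symm.trans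
      ((congrFun (congrFun hEB (r+1,i)) (s,j)).trans (Bmul_apply E (r+1) s i j))
    rwa [add_sub_cancel_right] at this
  have hg0 : ∀ (r s : Fin p) (i : ℕ), i < h →
      d s * Gf p h E r s i 0 = d r * (Gf p h E r s i 0 + Gf p h E r s (i+1) 0) := by
    intro r s i hi
    have hA1 : d s * (E (r,⟨i,hi⟩) (s,⟨0,hh⟩)
          + ∑ k : Fin h, (if (0:ℕ) = (k:ℕ)+1 then E (r,⟨i,hi⟩) (s,k) else 0))
        = d r * (E (r,⟨i,hi⟩) (s,⟨0,hh⟩)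
          + ∑ k : Fin h, (if (k:ℕ) = i+1 then E (r,k) (s,⟨0,hh⟩) else 0)) :=
      hA r s ⟨i,hi⟩ ⟨0,hh⟩
    have e0 : (∑ k : Fin h, (if (0:ℕ) = (k:ℕ)+1 then E (r,⟨i,hi⟩) (s,k) else 0)) = 0 :=
      Finset.sum_eq_zero (fun k _ => if_neg (by omega))
    rw [e0, add_zero, aux_sum (i+1) (fun k => E (r,k) (s,⟨0,hh⟩))] at hA1
    rw [Gf_lt E r s hi hh, Gf_eq_dite E r s (i+1) hh]
    exact hA1
  have hgS : ∀ (r s : Fin p) (i j : ℕ), i < h → j + 1 < h →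
      d s * (Gf p h E r s i (j+1) + Gf p h E r s i j)
      = d r * (Gf p h E r s i (j+1) + Gf p h E r s (i+1) (j+1)) := by
    intro r s i j hi hj
    have hj' : j < h := by omega
    have hA1 : d s * (E (r,⟨i,hi⟩) (s,⟨j+1,hj⟩)
          + ∑ k : Fin h, (if (j+1:ℕ) = (k:ℕ)+1 then E (r,⟨i,hi⟩) (s,k) else 0))
        = d r * (E (r,⟨i,hi⟩) (s,⟨j+1,hj⟩)
          + ∑ k : Fin h, (if (k:ℕ) = i+1 then E (r,k) (s,⟨j+1,hj⟩) else 0)) :=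
      hA r s ⟨i,hi⟩ ⟨j+1,hj⟩
    have e0 : (∑ k : Fin h, (if (j+1:ℕ) = (k:ℕ)+1 then E (r,⟨i,hi⟩) (s,k) else 0))
        = E (r,⟨i,hi⟩) (s,⟨j,hj'⟩) := by
      have ec : ∀ k : Fin h, (if (j+1:ℕ) = (k:ℕ)+1 then E (r,⟨i,hi⟩) (s,k) else 0)
          = (if (k:ℕ) = j then E (r,⟨i,hi⟩) (s,k) else 0) :=
        fun k => if_congr (by omega) rfl rfl
      rw [Finset.sum_congr rfl (fun k _ => ec k), aux_sum j, dif_pos hj']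
    rw [e0, aux_sum (i+1) (fun k => E (r,k) (s,⟨j+1,hj⟩))] at hA1
    rw [Gf_lt E r s hi hj, Gf_lt E r s hi hj', Gf_eq_dite E r s (i+1) hj]
    exact hA1
  -- off-diagonal vanishing
  have offdiag : ∀ (r s : Fin p), r ≠ s → ∀ (i j : Fin h), E (r,i) (s,j) = 0 := by
    intro r s hrs i j
    have hds : d s ≠ d r := fun hc => hrs (hdinj hc).symm
    have key : ∀ n (i j : ℕ), (h-1-i) + j ≤ n → Gf p h E r s i j = 0 := by
      intro n
      induction n with
      | zero =>
        intro i j hn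
        have hj0 : j = 0 := by omega
        subst hj0
        by_cases hi : i < h
        · have h0 := hg0 r s i hi
          rw [Gf_ge E r s (Or.inl (by omega : h ≤ i+1)), add_zero] at h0
          exact cancel_ne hds h0
        · exact Gf_ge E r s (Or.inl (by omega))
      | succ n ih =>
        intro i j hn
        by_cases hi : i < h
        · by_cases hj : j < h
          · cases j with
            | zero =>
              have h0 := hg0 r s i hi
              have hz : Gf p h E r s (i+1) 0 = 0 := by
                by_cases hi1 : i+1 < h
                · exact ih (i+1) 0 (by omega)
                · exact Gf_ge E r s (Or.inl (by omega))
              rw [hz, add_zero] at h0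
              exact cancel_ne hds h0
            | succ j' =>
              have hS := hgS r s i j' hi hj
              have h1 : Gf p h E r s i j' = 0 := ih i j' (by omega)
              have h2 : Gf p h E r s (i+1) (j'+1) = 0 := by
                by_cases hi1 : i+1 < h
                · exact ih (i+1) (j'+1) (by omega)
                · exact Gf_ge E r s (Or.inl (by omega))
              rw [h1, add_zero, h2, add_zero] at hS
              exact cancel_ne hds hS
          · exact Gf_ge E r s (Or.inr (by omega))
        · exact Gf_ge E r s (Or.inl (by omega))
    have := key ((h-1-(i:ℕ)) + (j:ℕ)) i j le_rfl
    rw [Gf_lt E r s i.isLt j.isLt] at this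
    simpa using this
  -- Toeplitz relation on diagonal blocks
  have htoe : ∀ (r : Fin p) (i j : ℕ), i < h → j+1 < h →
      Gf p h E r r i j = Gf p h E r r (i+1) (j+1) := by
    intro r i j hi hj
    have hS := hgS r r i j hi hj
    have hS' := mul_left_cancel₀ (hd0 r) hS
    linear_combination hS'
  -- strictly lower part of diagonal blocks vanishes
  have hlowN : ∀ (r : Fin p) (j i : ℕ), j < i → Gf p h E r r i j = 0 := by
    intro r j
    induction j with
    | zero =>
      intro i hi1
      by_cases hi : i < h
      · obtain ⟨i', rfl⟩ : ∃ i', i = i'+1 := ⟨i-1, by omega⟩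
        have h0 := hg0 r r i' (by omega)
        have h0' := mul_left_cancel₀ (hd0 r) h0
        linear_combination (-1 : ℂ) * h0'
      · exact Gf_ge E r r (Or.inl (by omega))
    | succ j' ih =>
      intro i hi
      by_cases hic : i < h
      · by_cases hjc : j'+1 < h
        · obtain ⟨i', rfl⟩ : ∃ i', i = i'+1 := ⟨i-1, by omega⟩
          rw [← htoe r i' j' (by omega) hjc]
          exact ih i' (by omega)
        · exact Gf_ge E r r (Or.inr (by omega))
      · exact Gf_ge E r r (Or.inl (by omega))
  have hlowF : ∀ (r : Fin p) (i j : Fin h), (j:ℕ) < (i:ℕ) → E (r,i) (r,j) = 0 := by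
    intro r i j hij
    have := hlowN r j i hij
    rw [Gf_lt E r r i.isLt j.isLt] at this
    simpa using this
  -- all diagonal entries of a diagonal block are equal
  have hdiagF : ∀ (r : Fin p) (i : Fin h),
      E (r,i) (r,i) = E (r,(⟨0,hh⟩ : Fin h)) (r,(⟨0,hh⟩ : Fin h)) := by
    intro r i
    have hstep : ∀ m : ℕ, m < h → Gf p h E r r m m = Gf p h E r r 0 0 := by
      intro m
      induction m with
      | zero => intro _; rfl
      | succ m' ih =>
        intro hm
        rw [← htoe r m' m' (by omega) hm]
        exact ih (by omega)
    have h2 := hstep (i:ℕ) i.isLt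
    rw [Gf_lt E r r i.isLt i.isLt, Gf_lt E r r hh hh] at h2
    simpa using h2
  -- diagonal blocks are all equal (r-independence)
  have hconst : ∀ (r : Fin p) (i j : Fin h), E (r,i) (r,j) = E (0,i) (0,j) := by
    have hiter : ∀ (t : ℕ) (r s : Fin p) (i j : Fin h),
        E (r + (t : Fin p), i) (s + (t : Fin p), j) = E (r,i) (s,j) := by
      intro t
      induction t with
      | zero => intro r s i j; simp
      | succ t ih =>
        intro r s i j
        have hc1 : ((t+1 : ℕ) : Fin p) = ((t:ℕ) : Fin p) + 1 := by push_cast; ring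
        rw [hc1, ← add_assoc, ← add_assoc, hshift, ih]
    intro r i j
    have := hiter (r : ℕ) 0 0 i j
    rwa [zero_add, Fin.cast_val_eq_self] at this
  -- idempotency of the principal block
  have hF2 : ∀ (i j : Fin h),
      (∑ k : Fin h, E ((0:Fin p),i) (0,k) * E ((0:Fin p),k) (0,j)) = E ((0:Fin p),i) (0,j) := by
    intro i j
    have h2 := congrFun (congrFun hE2 ((0:Fin p),i)) ((0:Fin p),j)
    rw [Matrix.mul_apply, Fintype.sum_prod_type] at h2
    rw [Finset.sum_eq_single (0:Fin p)] at h2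
    · exact h2
    · intro t _ ht
      apply Finset.sum_eq_zero
      intro k _
      rw [offdiag 0 t (Ne.symm ht) i k, zero_mul]
    · simp
  set c := E ((0:Fin p), (⟨0,hh⟩:Fin h)) ((0:Fin p), (⟨0,hh⟩:Fin h)) with hcdef
  have hc : c * c = c := by
    have hss := hF2 ⟨0,hh⟩ ⟨0,hh⟩
    rw [Finset.sum_eq_single ((⟨0,hh⟩ : Fin h))] at hss
    · exact hss
    · intro k _ hk
      rw [hlowF 0 k ⟨0,hh⟩ (Nat.pos_of_ne_zero (fun hc0 => hk (Fin.ext hc0))), mul_zero]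
    · simp
  have hcc : c = 0 ∨ c = 1 := by
    have hfac : c * (c - 1) = 0 := by linear_combination hc
    rcases mul_eq_zero.mp hfac with h' | h'
    · exact Or.inl h'
    · exact Or.inr (by linear_combination h')
  rcases hcc with hc0 | hc1
  · left
    have claim0 : ∀ n (i j : Fin h), (j:ℕ) ≤ (i:ℕ) + n → E ((0:Fin p),i) (0,j) = 0 := by
      intro n
      induction n with
      | zero =>
        intro i j hij
        by_cases hji : (j:ℕ) < (i:ℕ)
        · exact hlowF 0 i j hji
        · have hje : j = i := Fin.ext (by omega)
          rw [hje]
          exact (hdiagF 0 i).trans hc0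
      | succ n ih =>
        intro i j hij
        by_cases hle : (j:ℕ) ≤ (i:ℕ) + n
        · exact ih i j hle
        · rw [← hF2 i j]
          apply Finset.sum_eq_zero
          intro k _
          by_cases hk : (k:ℕ) ≤ (i:ℕ) + n
          · rw [ih i k hk, zero_mul]
          · rw [ih k j (by omega), mul_zero]
    apply Matrix.ext
    intro x y
    obtain ⟨r, i⟩ := x
    obtain ⟨s, j⟩ := y
    rw [Matrix.zero_apply]
    by_cases hrs : r = s
    · subst hrs
      rw [hconst r i j]
      exact claim0 (j:ℕ) i j (by omega)
    · exact offdiag r s hrs i j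
  · right
    have claim1 : ∀ n (i j : Fin h), (j:ℕ) ≤ (i:ℕ) + n →
        E ((0:Fin p),i) (0,j) = if i = j then 1 else 0 := by
      intro n
      induction n with
      | zero =>
        intro i j hij
        by_cases hji : (j:ℕ) < (i:ℕ)
        · rw [hlowF 0 i j hji, if_neg (fun hx => by rw [hx] at hji; omega)]
        · have hje : i = j := Fin.ext (by omega)
          rw [← hje, if_pos rfl]
          exact (hdiagF 0 i).trans hc1
      | succ n ih =>
        intro i j hij
        by_cases hle : (j:ℕ) ≤ (i:ℕ) + n
        · exact ih i j hle
        · have hj : (j:ℕ) = (i:ℕ) + n + 1 := by omega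
          have hne : i ≠ j := fun hx => by rw [hx] at hj; omega
          rw [if_neg hne]
          have hsum := hF2 i j
          rw [← Finset.sum_subset (Finset.subset_univ ({i,j} : Finset (Fin h)))] at hsum
          · rw [Finset.sum_pair hne, hdiagF 0 i, hdiagF 0 j, ← hcdef, hc1] at hsum
            linear_combination hsum
          · intro k _ hk
            simp only [Finset.mem_insert, Finset.mem_singleton] at hk
            push_neg at hk
            by_cases hkle : (k:ℕ) ≤ (i:ℕ) + n
            · rw [ih i k hkle, if_neg (fun hx => hk.1 hx.symm), zero_mul]
            · have hkj : (k:ℕ) ≠ (j:ℕ) := fun hx => hk.2 (Fin.ext hx)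
              rw [hlowF 0 k j (by omega), mul_zero]
    apply Matrix.ext
    intro x y
    obtain ⟨r, i⟩ := x
    obtain ⟨s, j⟩ := y
    rw [Matrix.one_apply]
    by_cases hrs : r = s
    · subst hrs
      rw [hconst r i j, claim1 (j:ℕ) i j (by omega)]
      by_cases hij : i = j <;> simp [hij, Prod.ext_iff]
    · rw [offdiag r s hrs i j, if_neg (fun hx => hrs (Prod.ext_iff.mp hx).1)]
end

/-- Let `σ : F₂ → U(p)` be the Heisenberg representation with
`σ(a) = diag(ζ^q, …, ζ^{pq})` (`ζ = e^{2πi/p}`, `gcd(p,q) = 1`) and `σ(b)` the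
cyclic permutation matrix, and let `τ : F₂ → GL(h, ℂ)` send `a` to the unipotent
Jordan block `J_h(1)` and `b` to `I`.  Then the only idempotent endomorphisms of
`ℂ^p ⊗ ℂ^h` commuting with `(σ⊗τ)(a)` and `(σ⊗τ)(b)` are `0` and `I`; hence
`σ ⊗ τ` is indecomposable. -/
theorem stmt17 (p : ℕ) [NeZero p] (h : ℕ) (hh : 1 ≤ h) (q : ℕ) (hpq : Nat.Coprime p q)
    (ζ : ℂ) (hζ : ζ = Complex.exp (2 * Real.pi * Complex.I / p))
    (σa : Matrix (Fin p) (Fin p) ℂ)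
    (hσa : σa = Matrix.diagonal fun r : Fin p => ζ ^ (q * ((r : ℕ) + 1)))
    (σb : Matrix (Fin p) (Fin p) ℂ)
    (hσb : σb = Matrix.of fun i j : Fin p => if i = j + 1 then (1 : ℂ) else 0)
    (τa : Matrix (Fin h) (Fin h) ℂ)
    (hτa : τa = Matrix.of fun i j : Fin h =>
      if j = i then (1 : ℂ) else if (j : ℕ) = (i : ℕ) + 1 then 1 else 0) :
    (∀ E : Matrix (Fin p × Fin h) (Fin p × Fin h) ℂ,
      E * (σa ⊗ₖ τa) = (σa ⊗ₖ τa) * E →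
      E * (σb ⊗ₖ (1 : Matrix (Fin h) (Fin h) ℂ)) = (σb ⊗ₖ (1 : Matrix (Fin h) (Fin h) ℂ)) * E →
      E * E = E → E = 0 ∨ E = 1) ∧
    ∀ W₁ W₂ : Submodule ℂ (Fin p × Fin h → ℂ),
      (∀ v ∈ W₁, (σa ⊗ₖ τa).mulVec v ∈ W₁) →
      (∀ v ∈ W₁, (σb ⊗ₖ (1 : Matrix (Fin h) (Fin h) ℂ)).mulVec v ∈ W₁) →
      (∀ v ∈ W₂, (σa ⊗ₖ τa).mulVec v ∈ W₂) →
      (∀ v ∈ W₂, (σb ⊗ₖ (1 : Matrix (Fin h) (Fin h) ℂ)).mulVec v ∈ W₂) →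
      IsCompl W₁ W₂ → W₁ = ⊥ ∨ W₂ = ⊥ := by
  subst hσb hτa
  -- the diagonal entries
  set d : Fin p → ℂ := fun r : Fin p => ζ ^ (q * ((r : ℕ) + 1)) with hd
  have hp0 : p ≠ 0 := NeZero.ne p
  have hprim : IsPrimitiveRoot ζ p := hζ ▸ Complex.isPrimitiveRoot_exp p hp0
  have hprimq : IsPrimitiveRoot (ζ ^ q) p := hprim.pow_of_coprime q hpq.symm
  have hζq0 : ζ ^ q ≠ 0 := by
    intro h0
    have h1 : (ζ ^ q) ^ p = 1 := hprimq.pow_eq_one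
    rw [h0, zero_pow hp0] at h1
    exact zero_ne_one h1
  have hζ0 : ζ ≠ 0 := by
    intro h0
    have h1 : ζ ^ p = 1 := hprim.pow_eq_one
    rw [h0, zero_pow hp0] at h1
    exact zero_ne_one h1
  have hd0 : ∀ r, d r ≠ 0 := fun r => pow_ne_zero _ hζ0
  have hdinj : Function.Injective d := by
    intro r s hrs
    simp only [hd] at hrs
    rw [pow_mul, pow_mul] at hrs
    rw [pow_succ, pow_succ] at hrs
    have h2 : (ζ ^ q) ^ (r : ℕ) = (ζ ^ q) ^ (s : ℕ) := mul_right_cancel₀ hζq0 hrs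
    exact Fin.ext (hprimq.pow_inj r.isLt s.isLt h2)
  have hσad : σa = Matrix.diagonal d := hσa
  subst hσad
  have part1 : ∀ E : Matrix (Fin p × Fin h) (Fin p × Fin h) ℂ,
      E * (Matrix.diagonal d ⊗ₖ (Matrix.of fun i j : Fin h =>
        if j = i then (1 : ℂ) else if (j : ℕ) = (i : ℕ) + 1 then 1 else 0))
      = (Matrix.diagonal d ⊗ₖ (Matrix.of fun i j : Fin h =>
        if j = i then (1 : ℂ) else if (j : ℕ) = (i : ℕ) + 1 then 1 else 0)) * E →
      E * ((Matrix.of fun i j : Fin p => if i = j + 1 then (1 : ℂ) else 0)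
        ⊗ₖ (1 : Matrix (Fin h) (Fin h) ℂ))
      = ((Matrix.of fun i j : Fin p => if i = j + 1 then (1 : ℂ) else 0)
        ⊗ₖ (1 : Matrix (Fin h) (Fin h) ℂ)) * E →
      E * E = E → E = 0 ∨ E = 1 :=
    fun E h1 h2 h3 => keylemma hh d hd0 hdinj E h1 h2 h3
  refine ⟨part1, ?_⟩
  intro W₁ W₂ h1A h1B h2A h2B hcompl
  set π : (Fin p × Fin h → ℂ) →ₗ[ℂ] (Fin p × Fin h → ℂ) :=
    W₁.subtype ∘ₗ W₁.projectionOnto W₂ hcompl with hπdef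
  have hπmem : ∀ v, π v ∈ W₁ := fun v => (W₁.projectionOnto W₂ hcompl v).2
  have hπ1 : ∀ v ∈ W₁, π v = v := by
    intro v hv
    have := Submodule.linearProjOfIsCompl_apply_left hcompl ⟨v, hv⟩
    simp only [hπdef, LinearMap.comp_apply, Submodule.coe_subtype]
    rw [this]
  have hπ2 : ∀ v ∈ W₂, π v = 0 := by
    intro v hv
    have := Submodule.projectionOnto_apply_of_mem_right hcompl hv
    simp only [hπdef, LinearMap.comp_apply, Submodule.coe_subtype]
    rw [this]
    rfl
  have hπsub : ∀ v, v - π v ∈ W₂ := by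
    intro v
    rw [← Submodule.linearProjOfIsCompl_apply_eq_zero_iff (h := hcompl)]
    rw [map_sub]
    have : W₁.projectionOnto W₂ hcompl (π v)
        = W₁.projectionOnto W₂ hcompl v := by
      simp only [hπdef, LinearMap.comp_apply, Submodule.coe_subtype]
      rw [Submodule.linearProjOfIsCompl_apply_left hcompl]
    rw [this, sub_self]
  set Ep : Matrix (Fin p × Fin h) (Fin p × Fin h) ℂ := LinearMap.toMatrix' π with hEp
  have hcomm : ∀ M : Matrix (Fin p × Fin h) (Fin p × Fin h) ℂ,
      (∀ v ∈ W₁, M.mulVec v ∈ W₁) → (∀ v ∈ W₂, M.mulVec v ∈ W₂) →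
      Ep * M = M * Ep := by
    intro M hM1 hM2
    have hl : π ∘ₗ Matrix.toLin' M = Matrix.toLin' M ∘ₗ π := by
      apply LinearMap.ext
      intro v
      simp only [LinearMap.comp_apply, Matrix.toLin'_apply]
      have e1 : M.mulVec v = M.mulVec (π v) + M.mulVec (v - π v) := by
        rw [← Matrix.mulVec_add, add_sub_cancel]
      rw [e1, map_add, hπ1 _ (hM1 _ (hπmem v)), hπ2 _ (hM2 _ (hπsub v)), add_zero]
    calc Ep * M = LinearMap.toMatrix' (π ∘ₗ Matrix.toLin' M) := by
          rw [LinearMap.toMatrix'_comp, LinearMap.toMatrix'_toLin', hEp]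
      _ = LinearMap.toMatrix' (Matrix.toLin' M ∘ₗ π) := by rw [hl]
      _ = M * Ep := by rw [LinearMap.toMatrix'_comp, LinearMap.toMatrix'_toLin', hEp]
  have hidem : Ep * Ep = Ep := by
    have hl : π ∘ₗ π = π := by
      apply LinearMap.ext
      intro v
      simp only [LinearMap.comp_apply]
      exact hπ1 _ (hπmem v)
    rw [hEp, ← LinearMap.toMatrix'_comp, hl]
  have hπeq : π = Matrix.toLin' Ep := by rw [hEp, Matrix.toLin'_toMatrix']
  rcases part1 Ep (hcomm _ h1A h2A) (hcomm _ h1B h2B) hidem with h0 | h1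
  · left
    rw [Submodule.eq_bot_iff]
    intro w hw
    have hthis : π w = w := hπ1 w hw
    rw [hπeq, h0, Matrix.toLin'_apply, Matrix.zero_mulVec] at hthis
    exact hthis.symm
  · right
    rw [Submodule.eq_bot_iff]
    intro w hw
    have hthis : π w = 0 := hπ2 w hw
    rw [hπeq, h1, Matrix.toLin'_one] at hthis
    simpa using hthis
end
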